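/- arXiv:2311.02263 — 3 statements merged into one kernel-verified Lean document; each statement's English description precedes it below -/
import Mathlib

section
/- (Expander mixing lemma for pseudoexpectations) Let n, d ≥ 1, q ≥ 2, λ ≥ 0, let σ : Fin n × Fin d ≃ Fin n × Fin d be a bijection specifying a d-regular bipartite graph that is λ-mixing, let t ≥ 2d be even, and let Ẽ be a degree-t pseudoexpectation over the variables {Z_{e,j} : e ∈ Fin n × Fin d, j ∈ Fin q}. For every ℓ ∈ Fin n let X_ℓ = Σ_{α : Fin d → Fin q} x_ℓ(α)·Z_{N_L(ℓ),α} and for every r ∈ Fin n let Y_r = Σ_{β : Fin d → Fin q} y_r(β)·Z_{N_R(r),β}, with arbitrary real coefficients x_ℓ(α), y_r(β). Then |𝔼_{(ℓ,i) ∈ Fin n × Fin d} Ẽ[X_ℓ · Y_{fst(σ(ℓ,i))}] − 𝔼_{ℓ ∈ Fin n} 𝔼_{r ∈ Fin n} Ẽ[X_ℓ · Y_r]| ≤ λ · sqrt(𝔼_ℓ Ẽ[X_ℓ²]) · sqrt(𝔼_r Ẽ[Y_r²]). -/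
open MvPolynomial

/-- A `d`-regular bipartite graph on left/right vertex sets `Fin n` with edge set
`Fin n × Fin d` is `λ`-mixing if the expander mixing inequality holds for all
real-valued functions on the two sides. -/
def IsMixing (n d : ℕ) (σ : Fin n × Fin d ≃ Fin n × Fin d) (lam : ℝ) : Prop :=
  ∀ F G : Fin n → ℝ,
    |(∑ e : Fin n × Fin d, F e.1 * G (σ e).1) / ((n : ℝ) * d)
        - ((∑ ℓ, F ℓ) / (n : ℝ)) * ((∑ r, G r) / (n : ℝ))|
      ≤ lam * Real.sqrt ((∑ ℓ, F ℓ ^ 2) / (n : ℝ)) * Real.sqrt ((∑ r, G r ^ 2) / (n : ℝ))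

/-- A degree-`t` pseudoexpectation over the variables `Z_{e,j}`, `e ∈ Fin n × Fin d`,
`j ∈ Fin q`. -/
def IsPseudoExpectation (n d q t : ℕ)
    (E : MvPolynomial ((Fin n × Fin d) × Fin q) ℝ →ₗ[ℝ] ℝ) : Prop :=
  E 1 = 1 ∧
  (∀ p : MvPolynomial ((Fin n × Fin d) × Fin q) ℝ, p.totalDegree ≤ t / 2 → 0 ≤ E (p ^ 2)) ∧
  (∀ (e : Fin n × Fin d) (j : Fin q) (p : MvPolynomial ((Fin n × Fin d) × Fin q) ℝ),
      p.totalDegree + 2 ≤ t → E (p * (X (e, j) ^ 2 - X (e, j))) = 0) ∧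
  (∀ (e : Fin n × Fin d) (p : MvPolynomial ((Fin n × Fin d) × Fin q) ℝ),
      p.totalDegree + 1 ≤ t → E (p * ((∑ j : Fin q, X (e, j)) - 1)) = 0)

/-- `Z_{N_L(ℓ), α} = ∏_{i} Z_{(ℓ,i), α i}`. -/
noncomputable def ZL (n d q : ℕ) (ℓ : Fin n) (α : Fin d → Fin q) :
    MvPolynomial ((Fin n × Fin d) × Fin q) ℝ :=
  ∏ i : Fin d, X ((ℓ, i), α i)

/-- `Z_{N_R(r), β} = ∏_{j} Z_{σ⁻¹(r,j), β j}`. -/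
noncomputable def ZR (n d q : ℕ) (σ : Fin n × Fin d ≃ Fin n × Fin d)
    (r : Fin n) (β : Fin d → Fin q) :
    MvPolynomial ((Fin n × Fin d) × Fin q) ℝ :=
  ∏ j : Fin d, X (σ.symm (r, j), β j)

/-- **Expander mixing lemma for pseudoexpectations.** For `d`-local functions
`X_ℓ = Σ_α x_ℓ(α)·Z_{N_L(ℓ),α}` and `Y_r = Σ_β y_r(β)·Z_{N_R(r),β}`,
`|𝔼_{(ℓ,i)} Ẽ[X_ℓ·Y_{σ(ℓ,i).1}] − 𝔼_ℓ 𝔼_r Ẽ[X_ℓ·Y_r]|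
  ≤ λ·sqrt(𝔼_ℓ Ẽ[X_ℓ²])·sqrt(𝔼_r Ẽ[Y_r²])`. -/
theorem eml_pseudoexpectation (n d q t : ℕ) (hn : 1 ≤ n) (hd : 1 ≤ d) (hq : 2 ≤ q)
    (lam : ℝ) (hlam : 0 ≤ lam)
    (σ : Fin n × Fin d ≃ Fin n × Fin d) (hmix : IsMixing n d σ lam)
    (ht : Even t) (htd : 2 * d ≤ t)
    (E : MvPolynomial ((Fin n × Fin d) × Fin q) ℝ →ₗ[ℝ] ℝ)
    (hE : IsPseudoExpectation n d q t E)
    (x y : Fin n → (Fin d → Fin q) → ℝ) :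
    |(∑ e : Fin n × Fin d,
        E ((∑ α : Fin d → Fin q, x e.1 α • ZL n d q e.1 α)
            * (∑ β : Fin d → Fin q, y (σ e).1 β • ZR n d q σ (σ e).1 β))) / ((n : ℝ) * d)
      - (∑ ℓ : Fin n, ∑ r : Fin n,
          E ((∑ α : Fin d → Fin q, x ℓ α • ZL n d q ℓ α)
              * (∑ β : Fin d → Fin q, y r β • ZR n d q σ r β))) / ((n : ℝ) * n)|
      ≤ lam
          * Real.sqrt ((∑ ℓ : Fin n,
              E ((∑ α : Fin d → Fin q, x ℓ α • ZL n d q ℓ α) ^ 2)) / (n : ℝ))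
          * Real.sqrt ((∑ r : Fin n,
              E ((∑ β : Fin d → Fin q, y r β • ZR n d q σ r β) ^ 2)) / (n : ℝ)) := by
  classical
  obtain ⟨hE1, hEsq, -, -⟩ := hE
  -- the polynomials
  set P : Fin n → MvPolynomial ((Fin n × Fin d) × Fin q) ℝ :=
    fun ℓ => ∑ α : Fin d → Fin q, x ℓ α • ZL n d q ℓ α with hP
  set Q : Fin n → MvPolynomial ((Fin n × Fin d) × Fin q) ℝ :=
    fun r => ∑ β : Fin d → Fin q, y r β • ZR n d q σ r β with hQ
  have hdt2 : d ≤ t / 2 := (Nat.le_div_iff_mul_le two_pos).mpr (by omega)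
  have hdegP : ∀ ℓ, (P ℓ).totalDegree ≤ t / 2 := by
    intro ℓ
    refine (totalDegree_finset_sum _ _).trans (Finset.sup_le fun α _ => ?_)
    refine ((totalDegree_smul_le _ _).trans ?_).trans hdt2
    refine (totalDegree_finset_prod _ _).trans ?_
    simp [totalDegree_X]
  have hdegQ : ∀ r, (Q r).totalDegree ≤ t / 2 := by
    intro r
    refine (totalDegree_finset_sum _ _).trans (Finset.sup_le fun β _ => ?_)
    refine ((totalDegree_smul_le _ _).trans ?_).trans hdt2
    refine (totalDegree_finset_prod _ _).trans ?_
    simp [totalDegree_X]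
  set R : Fin n ⊕ Fin n → MvPolynomial ((Fin n × Fin d) × Fin q) ℝ := Sum.elim P Q with hR
  have hdegR : ∀ a, (R a).totalDegree ≤ t / 2 := by
    rintro (a | a)
    · exact hdegP a
    · exact hdegQ a
  -- the Gram matrix
  set G : Matrix (Fin n ⊕ Fin n) (Fin n ⊕ Fin n) ℝ :=
    Matrix.of fun a b => E (R a * R b) with hGdef
  have hGpsd : G.PosSemidef := by
    refine Matrix.posSemidef_iff_dotProduct_mulVec.mpr ⟨?_, ?_⟩
    · ext a b
      simp only [Matrix.conjTranspose_apply, hGdef, Matrix.of_apply, star_trivial]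
      rw [mul_comm]
    · intro c
      have hdeg : (∑ a, c a • R a).totalDegree ≤ t / 2 :=
        (totalDegree_finset_sum _ _).trans
          (Finset.sup_le fun a _ => (totalDegree_smul_le _ _).trans (hdegR a))
      have hsq := hEsq _ hdeg
      have hexp : E ((∑ a, c a • R a) ^ 2) = ∑ a, ∑ b, c a * c b * E (R a * R b) := by
        rw [sq, Finset.sum_mul_sum, map_sum]
        refine Finset.sum_congr rfl fun a _ => ?_
        rw [map_sum]
        refine Finset.sum_congr rfl fun b _ => ?_
        rw [smul_mul_smul_comm, map_smul, smul_eq_mul]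
      have hdot : dotProduct (star c) (Matrix.mulVec G c)
          = ∑ a, ∑ b, c a * c b * E (R a * R b) := by
        simp only [dotProduct, Matrix.mulVec, star_trivial, hGdef, Matrix.of_apply]
        refine Finset.sum_congr rfl fun a _ => ?_
        rw [Finset.mul_sum]
        refine Finset.sum_congr rfl fun b _ => ?_
        ring
      exact hdot ▸ hexp ▸ hsq
  obtain ⟨B, hB⟩ : ∃ B : Matrix (Fin n ⊕ Fin n) (Fin n ⊕ Fin n) ℝ, G = Matrix.conjTranspose B * B := by
    open scoped MatrixOrder in
    obtain ⟨B, hB⟩ := CStarAlgebra.nonneg_iff_eq_star_mul_self.mp hGpsd.nonneg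
    exact ⟨B, hB⟩
  have hGram : ∀ a b, E (R a * R b) = ∑ k, B k a * B k b := by
    intro a b
    have := congrFun (congrFun hB a) b
    simpa [hGdef, Matrix.mul_apply, Matrix.conjTranspose_apply] using this
  set u : Fin n → (Fin n ⊕ Fin n) → ℝ := fun ℓ k => B k (Sum.inl ℓ) with hu
  set v : Fin n → (Fin n ⊕ Fin n) → ℝ := fun r k => B k (Sum.inr r) with hv
  have hXY : ∀ ℓ r, E (P ℓ * Q r) = ∑ k, u ℓ k * v r k := fun ℓ r =>
    hGram (Sum.inl ℓ) (Sum.inr r)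
  have hXX : ∀ ℓ, E (P ℓ ^ 2) = ∑ k, u ℓ k ^ 2 := by
    intro ℓ
    rw [sq]
    simp only [sq]; exact hGram (Sum.inl ℓ) (Sum.inl ℓ)
  have hYY : ∀ r, E (Q r ^ 2) = ∑ k, v r k ^ 2 := by
    intro r
    rw [sq]
    simp only [sq]; exact hGram (Sum.inr r) (Sum.inr r)
  -- rewrite all four sums
  have e1 : (∑ e : Fin n × Fin d, E (P e.1 * Q (σ e).1))
      = ∑ k, ∑ e : Fin n × Fin d, u e.1 k * v (σ e).1 k := by
    rw [Finset.sum_comm]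
    exact Finset.sum_congr rfl fun e _ => hXY e.1 (σ e).1
  have e2 : (∑ ℓ : Fin n, ∑ r : Fin n, E (P ℓ * Q r))
      = ∑ k, (∑ ℓ, u ℓ k) * (∑ r, v r k) := by
    have : (∑ ℓ : Fin n, ∑ r : Fin n, E (P ℓ * Q r))
        = ∑ ℓ : Fin n, ∑ k, ∑ r : Fin n, u ℓ k * v r k := by
      refine Finset.sum_congr rfl fun ℓ _ => ?_
      rw [Finset.sum_comm]
      exact Finset.sum_congr rfl fun r _ => hXY ℓ r
    rw [this, Finset.sum_comm]
    refine Finset.sum_congr rfl fun k _ => ?_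
    rw [Finset.sum_mul_sum]
  have e3 : (∑ ℓ : Fin n, E (P ℓ ^ 2)) = ∑ k, ∑ ℓ, u ℓ k ^ 2 := by
    rw [Finset.sum_comm]
    exact Finset.sum_congr rfl fun ℓ _ => hXX ℓ
  have e4 : (∑ r : Fin n, E (Q r ^ 2)) = ∑ k, ∑ r, v r k ^ 2 := by
    rw [Finset.sum_comm]
    exact Finset.sum_congr rfl fun r _ => hYY r
  show |(∑ e : Fin n × Fin d, E (P e.1 * Q (σ e).1)) / ((n : ℝ) * d)
      - (∑ ℓ : Fin n, ∑ r : Fin n, E (P ℓ * Q r)) / ((n : ℝ) * n)|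
      ≤ lam * Real.sqrt ((∑ ℓ : Fin n, E (P ℓ ^ 2)) / (n : ℝ))
          * Real.sqrt ((∑ r : Fin n, E (Q r ^ 2)) / (n : ℝ))
  rw [e1, e2, e3, e4]
  have hn0 : (0 : ℝ) ≤ (n : ℝ) := Nat.cast_nonneg n
  -- coordinatewise mixing bound
  have key : ∀ k, |(∑ e : Fin n × Fin d, u e.1 k * v (σ e).1 k) / ((n : ℝ) * d)
      - ((∑ ℓ, u ℓ k) * (∑ r, v r k)) / ((n : ℝ) * n)|
      ≤ lam * (Real.sqrt ((∑ ℓ, u ℓ k ^ 2) / (n : ℝ))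
               * Real.sqrt ((∑ r, v r k ^ 2) / (n : ℝ))) := by
    intro k
    have := hmix (fun ℓ => u ℓ k) (fun r => v r k)
    rw [div_mul_div_comm] at this
    rw [mul_assoc] at this
    exact this
  calc |(∑ k, ∑ e : Fin n × Fin d, u e.1 k * v (σ e).1 k) / ((n : ℝ) * d)
        - (∑ k, (∑ ℓ, u ℓ k) * (∑ r, v r k)) / ((n : ℝ) * n)|
      = |∑ k, ((∑ e : Fin n × Fin d, u e.1 k * v (σ e).1 k) / ((n : ℝ) * d)
          - ((∑ ℓ, u ℓ k) * (∑ r, v r k)) / ((n : ℝ) * n))| := by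
        rw [Finset.sum_sub_distrib, Finset.sum_div, Finset.sum_div]
    _ ≤ ∑ k, |(∑ e : Fin n × Fin d, u e.1 k * v (σ e).1 k) / ((n : ℝ) * d)
          - ((∑ ℓ, u ℓ k) * (∑ r, v r k)) / ((n : ℝ) * n)| :=
        Finset.abs_sum_le_sum_abs _ _
    _ ≤ ∑ k, lam * (Real.sqrt ((∑ ℓ, u ℓ k ^ 2) / (n : ℝ))
          * Real.sqrt ((∑ r, v r k ^ 2) / (n : ℝ))) :=
        Finset.sum_le_sum fun k _ => key k
    _ = lam * ∑ k, Real.sqrt ((∑ ℓ, u ℓ k ^ 2) / (n : ℝ))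
          * Real.sqrt ((∑ r, v r k ^ 2) / (n : ℝ)) := by
        rw [Finset.mul_sum]
    _ ≤ lam * (Real.sqrt (∑ k, (∑ ℓ, u ℓ k ^ 2) / (n : ℝ))
          * Real.sqrt (∑ k, (∑ r, v r k ^ 2) / (n : ℝ))) := by
        refine mul_le_mul_of_nonneg_left ?_ hlam
        exact Real.sum_sqrt_mul_sqrt_le _
          (fun k => div_nonneg (Finset.sum_nonneg fun ℓ _ => sq_nonneg _) hn0)
          (fun k => div_nonneg (Finset.sum_nonneg fun r _ => sq_nonneg _) hn0)
    _ = lam * Real.sqrt ((∑ k, ∑ ℓ, u ℓ k ^ 2) / (n : ℝ))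
          * Real.sqrt ((∑ k, ∑ r, v r k ^ 2) / (n : ℝ)) := by
        rw [← Finset.sum_div, ← Finset.sum_div, mul_assoc]
end

section
/- (Distance of Tanner code from η-good pseudocodewords) Let n, d ≥ 1, q ≥ 2, let 0 ≤ λ and 0 < δ₀ ≤ 1, with λ ≤ δ₀/3 and 0 ≤ η ≤ δ₀²/9. Let σ : Fin n × Fin d ≃ Fin n × Fin d be a bijection specifying a d-regular bipartite graph that is λ-mixing, let C₀ ⊆ (Fin d → Fin q) be a code in which any two distinct codewords differ in at least δ₀·d coordinates, let t ≥ 4d be even, let Ẽ be a degree-t Tanner pseudocodeword with respect to σ and C₀ that is η-good, and let h : Fin n × Fin d → Fin q be a word all of whose left rows and right rows lie in C₀. Define Δ(Ẽ, h) := 𝔼_{e ∈ Fin n × Fin d}[1 − Ẽ[Z_{e,h(e)}]]. Then either Δ(Ẽ, h) ≤ 3η or Δ(Ẽ, h) ≥ δ₀·(δ₀ − λ) − 3η. -/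
open MvPolynomial

/-- A degree-`t` Tanner pseudocodeword: a degree-`t` pseudoexpectation that in addition
respects the inner-code constraints on every left and every right neighborhood. -/
def IsTannerPseudocodeword (n d q t : ℕ) (σ : Fin n × Fin d ≃ Fin n × Fin d)
    (C₀ : Set (Fin d → Fin q))
    (E : MvPolynomial ((Fin n × Fin d) × Fin q) ℝ →ₗ[ℝ] ℝ) : Prop :=
  IsPseudoExpectation n d q t E ∧
  (∀ (ℓ : Fin n) (α : Fin d → Fin q), α ∉ C₀ →
    ∀ p : MvPolynomial ((Fin n × Fin d) × Fin q) ℝ,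
      p.totalDegree + d ≤ t → E (p * ZL n d q ℓ α) = 0) ∧
  (∀ (r : Fin n) (β : Fin d → Fin q), β ∉ C₀ →
    ∀ p : MvPolynomial ((Fin n × Fin d) × Fin q) ℝ,
      p.totalDegree + d ≤ t → E (p * ZR n d q σ r β) = 0)

/-- `Ẽ` is `η`-good. -/
def IsEtaGood (n d q : ℕ) (σ : Fin n × Fin d ≃ Fin n × Fin d)
    (E : MvPolynomial ((Fin n × Fin d) × Fin q) ℝ →ₗ[ℝ] ℝ) (η : ℝ) : Prop :=
  (∑ ℓ : Fin n, ∑ r : Fin n, ∑ α : Fin d → Fin q, ∑ β : Fin d → Fin q,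
      |E (ZL n d q ℓ α * ZR n d q σ r β) - E (ZL n d q ℓ α) * E (ZR n d q σ r β)|)
    / ((n : ℝ) * n) ≤ η


open Finset

namespace TannerAux

abbrev PP (n d q : ℕ) := MvPolynomial ((Fin n × Fin d) × Fin q) ℝ

variable {n d q t : ℕ}

section Basic

variable (E : PP n d q →ₗ[ℝ] ℝ)
variable (hE1 : E 1 = 1)
  (hsos : ∀ p : PP n d q, p.totalDegree ≤ t / 2 → 0 ≤ E (p ^ 2))
  (hbool : ∀ (e : Fin n × Fin d) (j : Fin q) (p : PP n d q),
      p.totalDegree + 2 ≤ t → E (p * (X (e, j) ^ 2 - X (e, j))) = 0)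
  (hsum : ∀ (e : Fin n × Fin d) (p : PP n d q),
      p.totalDegree + 1 ≤ t → E (p * ((∑ j : Fin q, X (e, j)) - 1)) = 0)

theorem E_C_mul (c : ℝ) (p : PP n d q) : E (C c * p) = c * E p := by
  rw [← smul_eq_C_mul]; exact E.map_smul c p

include hbool in
theorem Ebool (e : Fin n × Fin d) (j : Fin q) (p : PP n d q) (hp : p.totalDegree + 2 ≤ t) :
    E (p * X (e, j) ^ 2) = E (p * X (e, j)) := by
  have h0 := hbool e j p hp
  have hid : p * (X (e, j) ^ 2 - X (e, j)) = p * X (e, j) ^ 2 - p * X (e, j) := by ring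
  rw [hid, map_sub] at h0
  linarith

theorem deg_prodX {ι : Type*} (s : Finset ι) (w : ι → (Fin n × Fin d) × Fin q) :
    (∏ i ∈ s, (X (w i) : PP n d q)).totalDegree ≤ s.card := by
  refine (totalDegree_finset_prod s _).trans ?_
  simp [totalDegree_X]

include hbool in
theorem Esq_prod {ι : Type*} [DecidableEq ι] (w : ι → (Fin n × Fin d) × Fin q)
    (s : Finset ι) (p : PP n d q) (hp : p.totalDegree + 2 * s.card ≤ t) :
    E (p * (∏ i ∈ s, X (w i)) ^ 2) = E (p * ∏ i ∈ s, X (w i)) := by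
  induction s using Finset.induction generalizing p with
  | empty => simp
  | @insert a s ha ih =>
    rw [Finset.prod_insert ha]
    rw [Finset.card_insert_of_notMem ha] at hp
    have e1 : p * (X (w a) * ∏ i ∈ s, X (w i)) ^ 2
        = (p * (∏ i ∈ s, X (w i)) ^ 2) * X (w a) ^ 2 := by ring
    have hds : ((∏ i ∈ s, X (w i) : PP n d q) ^ 2).totalDegree ≤ 2 * s.card := by
      rw [pow_two]
      refine (totalDegree_mul _ _).trans ?_
      have := deg_prodX (n := n) (d := d) (q := q) s w
      omega
    have hdeg : (p * (∏ i ∈ s, X (w i)) ^ 2).totalDegree + 2 ≤ t := by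
      have := totalDegree_mul p ((∏ i ∈ s, X (w i) : PP n d q) ^ 2)
      omega
    rw [e1, Ebool E hbool _ _ _ hdeg]
    have e2 : (p * (∏ i ∈ s, X (w i)) ^ 2) * X (w a)
        = (p * X (w a)) * (∏ i ∈ s, X (w i)) ^ 2 := by ring
    have hdeg2 : (p * X (w a)).totalDegree + 2 * s.card ≤ t := by
      have h1 : (p * X (w a)).totalDegree ≤ p.totalDegree + 1 := by
        refine (totalDegree_mul _ _).trans ?_
        simp [totalDegree_X]
      omega
    rw [e2, ih (p * X (w a)) hdeg2]
    congr 1; ring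

include hbool hsos in
theorem Emono_nonneg {ι : Type*} [DecidableEq ι] (w : ι → (Fin n × Fin d) × Fin q)
    (s : Finset ι) (hs : s.card ≤ t / 2) :
    0 ≤ E (∏ i ∈ s, X (w i)) := by
  have h2 : 2 * s.card ≤ t := by
    have := Nat.div_mul_le_self t 2
    omega
  have hr := Esq_prod E hbool w s 1 (by simpa using h2)
  rw [one_mul, one_mul] at hr
  rw [← hr]
  exact hsos _ ((deg_prodX s w).trans hs)

include hsos in
theorem ECS (f g : PP n d q) (hf : f.totalDegree ≤ t / 2) (hg : g.totalDegree ≤ t / 2) :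
    (E (f * g)) ^ 2 ≤ E (f ^ 2) * E (g ^ 2) := by
  have key : ∀ s : ℝ, 0 ≤ E (g * g) * (s * s) + (2 * E (f * g)) * s + E (f * f) := by
    intro s
    have hdeg : (f + s • g).totalDegree ≤ t / 2 := by
      refine (totalDegree_add _ _).trans (max_le hf ?_)
      exact (totalDegree_smul_le _ _).trans hg
    have h := hsos _ hdeg
    have hid : (f + s • g) ^ 2 = f * f + s • (f * g) + (s • (g * f) + (s * s) • (g * g)) := by
      rw [pow_two, add_mul, mul_add, mul_add, mul_smul_comm, smul_mul_assoc,
        smul_mul_assoc, mul_smul_comm, smul_smul]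
    rw [hid, map_add, map_add, map_add, map_smul, map_smul, map_smul] at h
    simp only [smul_eq_mul, mul_comm g f] at h
    nlinarith [h]
  have hd := discrim_le_zero key
  rw [discrim] at hd
  have h2 : E (f ^ 2) = E (f * f) := by rw [pow_two]
  have h3 : E (g ^ 2) = E (g * g) := by rw [pow_two]
  rw [h2, h3]
  nlinarith [hd]

include hbool in
theorem EboolV (v : (Fin n × Fin d) × Fin q) (p : PP n d q) (hp : p.totalDegree + 2 ≤ t) :
    E (p * X v ^ 2) = E (p * X v) := by
  have h0 := Ebool E hbool v.1 v.2 p hp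
  rw [Prod.mk.eta] at h0
  exact h0

include hsos hbool hsum in
theorem Eorth (ht4 : 4 ≤ t) (e : Fin n × Fin d) {j k : Fin q} (hjk : j ≠ k)
    (p : PP n d q) (hp : p.totalDegree ≤ t / 2) :
    E (p * (X (e, j) * X (e, k))) = 0 := by
  have ht2 : 2 ≤ t / 2 := by omega
  -- nonnegativity of pair moments
  have hnn : ∀ k' : Fin q, j ≠ k' → 0 ≤ E (X (e, j) * X (e, k')) := by
    intro k' _
    have hB := Emono_nonneg E hsos hbool
      (w := fun b : Bool => cond b (e, j) (e, k')) (s := univ)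
      (by simpa using ht2)
    simpa only [Fintype.prod_bool, cond_true, cond_false] using hB
  -- diagonal moment
  have hdiag : E (X (e, j) * X (e, j)) = E (X (e, j)) := by
    have := Ebool E hbool e j 1 (by rw [totalDegree_one]; omega)
    simpa [pow_two] using this
  -- sum identity
  have hsum1 : ∑ k' : Fin q, E (X (e, j) * X (e, k')) = E (X (e, j)) := by
    have h0 := hsum e (X (e, j)) (by simp [totalDegree_X]; omega)
    have hid : (X (e, j) : PP n d q) * ((∑ j' : Fin q, X (e, j')) - 1)
        = (∑ k' : Fin q, X (e, j) * X (e, k')) - X (e, j) := by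
      rw [mul_sub, mul_one, Finset.mul_sum]
    rw [hid, map_sub, map_sum] at h0
    linarith
  have hsplit := Finset.add_sum_erase (univ : Finset (Fin q))
    (fun k' => E (X (e, j) * X (e, k'))) (mem_univ j)
  have hzero : ∑ k' ∈ (univ : Finset (Fin q)).erase j, E (X (e, j) * X (e, k')) = 0 := by
    rw [hsum1] at hsplit
    rw [hdiag] at hsplit
    linarith
  have hterm : E (X (e, j) * X (e, k)) = 0 := by
    have := (Finset.sum_eq_zero_iff_of_nonneg ?nn).mp hzero k (by simp [hjk.symm])
    · exact this
    case nn => intro k' hk'; exact hnn k' (by simpa [eq_comm] using (Finset.mem_erase.mp hk').1)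
  -- squared pair moment is zero
  have hsq : E ((X (e, j) * X (e, k)) ^ 2) = 0 := by
    have hB := Esq_prod E hbool
      (w := fun b : Bool => cond b (e, j) (e, k)) (s := univ) 1 (by simpa using ht4)
    rw [one_mul, one_mul] at hB
    simp only [Fintype.prod_bool, cond_true, cond_false] at hB
    rw [hB]
    exact hterm
  have hcs := ECS E hsos p (X (e, j) * X (e, k)) hp ?degg
  case degg =>
    refine (totalDegree_mul _ _).trans ?_
    simp only [totalDegree_X]; omega
  rw [hsq, mul_zero] at hcs
  have := sq_nonneg (E (p * (X (e, j) * X (e, k))))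
  have h0 : (E (p * (X (e, j) * X (e, k)))) ^ 2 = 0 := le_antisymm hcs this
  exact sq_eq_zero_iff.mp h0

include hsum in
theorem Esum1 (e : Fin n × Fin d) (p : PP n d q) (hp : p.totalDegree + 1 ≤ t) :
    E (p * ∑ j : Fin q, X (e, j)) = E p := by
  have h0 := hsum e p hp
  have hid : p * ((∑ j : Fin q, X (e, j)) - 1) = p * (∑ j : Fin q, X (e, j)) - p := by ring
  rw [hid, map_sub] at h0
  linarith

theorem degsumX (e : Fin n × Fin d) : (∑ j : Fin q, (X (e, j) : PP n d q)).totalDegree ≤ 1 := by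
  refine (totalDegree_finset_sum _ _).trans ?_
  simp [totalDegree_X]

include hsum in
theorem Eprod_sum_one (ε : Fin d → Fin n × Fin d) (s : Finset (Fin d)) (p : PP n d q)
    (hp : p.totalDegree + s.card ≤ t) :
    E (p * ∏ i ∈ s, (∑ j : Fin q, X (ε i, j))) = E p := by
  induction s using Finset.induction generalizing p with
  | empty => simp
  | @insert a s ha ih =>
    rw [Finset.prod_insert ha]
    rw [Finset.card_insert_of_notMem ha] at hp
    have hds : (∏ i ∈ s, (∑ j : Fin q, X (ε i, j)) : PP n d q).totalDegree ≤ s.card := by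
      refine (totalDegree_finset_prod _ _).trans ?_
      calc ∑ i ∈ s, (∑ j : Fin q, (X (ε i, j) : PP n d q)).totalDegree
          ≤ ∑ _i ∈ s, 1 := Finset.sum_le_sum (fun i _ => degsumX (ε i))
        _ = s.card := by simp
    have e1 : p * ((∑ j : Fin q, X (ε a, j)) * ∏ i ∈ s, (∑ j : Fin q, X (ε i, j)))
        = (p * ∏ i ∈ s, (∑ j : Fin q, X (ε i, j))) * (∑ j : Fin q, X (ε a, j)) := by ring
    rw [e1, Esum1 E hsum (ε a) _ ?d1]
    case d1 =>
      have := totalDegree_mul p (∏ i ∈ s, (∑ j : Fin q, X (ε i, j)) : PP n d q)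
      omega
    exact ih p (by omega)

include hsum in
theorem Eexpand (ε : Fin d → Fin n × Fin d) (p : PP n d q) (hp : p.totalDegree + d ≤ t) :
    E p = ∑ α : Fin d → Fin q, E (p * ∏ i, X (ε i, α i)) := by
  have h1 := Eprod_sum_one E hsum ε univ p (by simpa using hp)
  have h2 : (∏ i, (∑ j : Fin q, X (ε i, j)) : PP n d q)
      = ∑ α : Fin d → Fin q, ∏ i, X (ε i, α i) :=
    Fintype.prod_sum (fun i j => (X (ε i, j) : PP n d q))
  rw [h2, Finset.mul_sum, map_sum] at h1
  exact h1.symm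

include hsum in
theorem EexpandC (ε : Fin d → Fin n × Fin d) (p : PP n d q) (hp : p.totalDegree + d ≤ t)
    (α₀ : Fin d → Fin q) :
    E (p * (1 - ∏ i, X (ε i, α₀ i)))
      = ∑ α ∈ (univ : Finset (Fin d → Fin q)).erase α₀, E (p * ∏ i, X (ε i, α i)) := by
  have h1 := Eexpand E hsum ε p hp
  have h2 := Finset.add_sum_erase (univ : Finset (Fin d → Fin q))
    (fun α => E (p * ∏ i, X (ε i, α i))) (mem_univ α₀)
  have hid : p * (1 - ∏ i, X (ε i, α₀ i)) = p - p * ∏ i, X (ε i, α₀ i) := by ring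
  rw [hid, map_sub]
  rw [h1, ← h2]
  ring

include hbool in
theorem Eabsorb {ι : Type*} [Fintype ι] [DecidableEq ι] (w : ι → (Fin n × Fin d) × Fin q)
    (i₀ : ι) (p : PP n d q) (hp : p.totalDegree + (Fintype.card ι + 1) ≤ t) :
    E (p * X (w i₀) * ∏ i, X (w i)) = E (p * ∏ i, X (w i)) := by
  rw [← Finset.mul_prod_erase univ _ (mem_univ i₀)]
  have e1 : p * X (w i₀) * (X (w i₀) * ∏ i ∈ univ.erase i₀, X (w i))
      = (p * ∏ i ∈ univ.erase i₀, X (w i)) * X (w i₀) ^ 2 := by ring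
  have e2 : p * (X (w i₀) * ∏ i ∈ univ.erase i₀, X (w i))
      = (p * ∏ i ∈ univ.erase i₀, X (w i)) * X (w i₀) := by ring
  have hdeg : (p * ∏ i ∈ univ.erase i₀, X (w i)).totalDegree + 2 ≤ t := by
    have h1 := totalDegree_mul p (∏ i ∈ univ.erase i₀, (X (w i) : PP n d q))
    have h2 := deg_prodX (n := n) (d := d) (q := q) (univ.erase i₀) w
    have h3 : (univ.erase i₀).card = Fintype.card ι - 1 := by
      rw [Finset.card_erase_of_mem (mem_univ i₀), Finset.card_univ]
    have h4 : 1 ≤ Fintype.card ι := Fintype.card_pos_iff.mpr ⟨i₀⟩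
    omega
  rw [e1, e2, EboolV E hbool (w i₀) _ hdeg]

include hE1 hsos hbool hsum in
theorem vertex_distance (hd1 : 1 ≤ d) (h4d : 4 * d ≤ t)
    (δ₀ : ℝ) (hδ₀0 : 0 ≤ δ₀)
    (C₀ : Set (Fin d → Fin q))
    (hC₀ : ∀ u ∈ C₀, ∀ v ∈ C₀, u ≠ v → δ₀ * d ≤ (hammingDist u v : ℝ))
    (h : Fin n × Fin d → Fin q)
    (ε : Fin d → Fin n × Fin d)
    (hkill : ∀ β : Fin d → Fin q, β ∉ C₀ → E (∏ i, X (ε i, β i)) = 0)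
    (hrow : (fun i => h (ε i)) ∈ C₀) :
    0 ≤ 1 - E (∏ i, X (ε i, h (ε i))) ∧
      δ₀ * d * (1 - E (∏ i, X (ε i, h (ε i)))) ≤ ∑ i, (1 - E (X (ε i, h (ε i)))) := by
  have hdt2 : d ≤ t / 2 := by
    rw [Nat.le_div_iff_mul_le (by norm_num : 0 < 2)]; omega
  set α₀ : Fin d → Fin q := fun i => h (ε i) with hα₀
  set μ : (Fin d → Fin q) → ℝ := fun α => E (∏ i, X (ε i, α i)) with hμ
  have hμ0 : ∀ α, 0 ≤ μ α := by
    intro α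
    have := Emono_nonneg E hsos hbool (w := fun i => (ε i, α i)) (s := univ)
      (by simpa using hdt2)
    simpa [hμ] using this
  have hμsum : ∑ α : Fin d → Fin q, μ α = 1 := by
    have := Eexpand E hsum ε 1 (by rw [totalDegree_one]; omega)
    simp only [one_mul] at this
    rw [hE1] at this
    exact this.symm
  have hχ : ∀ i : Fin d, E (X (ε i, h (ε i)))
      = ∑ α ∈ univ.filter (fun α : Fin d → Fin q => α i = h (ε i)), μ α := by
    intro i
    have hexp := Eexpand E hsum ε (X (ε i, h (ε i)))
      (by rw [totalDegree_X]; omega)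
    have hterm : ∀ α : Fin d → Fin q,
        E (X (ε i, h (ε i)) * ∏ i', X (ε i', α i'))
          = if α i = h (ε i) then μ α else 0 := by
      intro α
      by_cases hcase : α i = h (ε i)
      · rw [if_pos hcase, ← hcase]
        have habs := Eabsorb E hbool (w := fun i' => (ε i', α i')) i 1
          (by rw [totalDegree_one]; simp only [Fintype.card_fin]; omega)
        simpa [hμ] using habs
      · rw [if_neg hcase]
        have hsplit : (∏ i', (X (ε i', α i') : PP n d q))
            = X (ε i, α i) * ∏ i' ∈ univ.erase i, X (ε i', α i') :=
          (Finset.mul_prod_erase univ _ (mem_univ i)).symm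
        have hre : X (ε i, h (ε i)) * ∏ i', (X (ε i', α i') : PP n d q)
            = (∏ i' ∈ univ.erase i, X (ε i', α i'))
              * (X (ε i, h (ε i)) * X (ε i, α i)) := by
          rw [hsplit]; ring
        rw [hre]
        refine Eorth E hsos hbool hsum (by omega) (ε i)
          (fun hco => hcase hco.symm) _ ?_
        refine (deg_prodX _ _).trans ?_
        have : (univ.erase i).card ≤ d := by
          refine le_trans (Finset.card_le_card (Finset.erase_subset _ _)) ?_
          simp
        omega
    rw [hexp]
    rw [Finset.sum_congr rfl (fun α _ => hterm α)]
    rw [← Finset.sum_filter]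
  have honeminus : ∀ i : Fin d, 1 - E (X (ε i, h (ε i)))
      = ∑ α ∈ univ.filter (fun α : Fin d → Fin q => ¬ (α i = h (ε i))), μ α := by
    intro i
    have := Finset.sum_filter_add_sum_filter_not (univ : Finset (Fin d → Fin q))
      (fun α => α i = h (ε i)) μ
    rw [hμsum] at this
    rw [hχ i]
    linarith
  have hswap : ∑ i : Fin d, (1 - E (X (ε i, h (ε i))))
      = ∑ α : Fin d → Fin q, (hammingDist α α₀ : ℝ) * μ α := by
    rw [Finset.sum_congr rfl (fun i _ => honeminus i)]
    have h1 : ∀ i : Fin d, ∑ α ∈ univ.filter (fun α : Fin d → Fin q => ¬ (α i = h (ε i))), μ α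
        = ∑ α : Fin d → Fin q, if ¬ (α i = h (ε i)) then μ α else 0 := by
      intro i; rw [Finset.sum_filter]
    rw [Finset.sum_congr rfl (fun i _ => h1 i), Finset.sum_comm]
    refine Finset.sum_congr rfl (fun α _ => ?_)
    rw [← Finset.sum_filter, Finset.sum_const, nsmul_eq_mul]
    congr 1
  have hμα₀ : E (∏ i, X (ε i, h (ε i))) = μ α₀ := rfl
  have hsum_erase : ∑ α ∈ (univ : Finset (Fin d → Fin q)).erase α₀, μ α = 1 - μ α₀ := by
    have := Finset.add_sum_erase (univ : Finset (Fin d → Fin q)) μ (mem_univ α₀)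
    linarith [hμsum, this]
  have hA : 0 ≤ 1 - μ α₀ := by
    rw [← hsum_erase]
    exact Finset.sum_nonneg (fun α _ => hμ0 α)
  refine ⟨by rw [hμα₀]; exact hA, ?_⟩
  rw [hμα₀, hswap]
  calc δ₀ * ↑d * (1 - μ α₀) = ∑ α ∈ (univ : Finset (Fin d → Fin q)).erase α₀, δ₀ * ↑d * μ α := by
        rw [← Finset.mul_sum, hsum_erase]
    _ ≤ ∑ α ∈ (univ : Finset (Fin d → Fin q)).erase α₀, (hammingDist α α₀ : ℝ) * μ α := by
        refine Finset.sum_le_sum (fun α hα => ?_)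
        have hne : α ≠ α₀ := (Finset.mem_erase.mp hα).1
        by_cases hmem : α ∈ C₀
        · exact mul_le_mul_of_nonneg_right (hC₀ α hmem _ hrow hne) (hμ0 α)
        · have : μ α = 0 := hkill α hmem
          rw [this, mul_zero, mul_zero]
    _ ≤ ∑ α : Fin d → Fin q, (hammingDist α α₀ : ℝ) * μ α := by
        refine Finset.sum_le_sum_of_subset_of_nonneg (Finset.subset_univ _) ?_
        intro α _ _
        exact mul_nonneg (by positivity) (hμ0 α)

include hE1 hsos hbool hsum in
theorem edge_bound (hd1 : 1 ≤ d) (h4d : 4 * d ≤ t)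
    (σ : Fin n × Fin d ≃ Fin n × Fin d) (h : Fin n × Fin d → Fin q) (e : Fin n × Fin d) :
    1 - E (X (e, h e)) ≤
      E ((1 - ∏ i, X ((e.1, i), h (e.1, i)))
        * (1 - ∏ j, X (σ.symm ((σ e).1, j), h (σ.symm ((σ e).1, j))))) := by
  have hdt2 : 2 * d ≤ t / 2 := by
    rw [Nat.le_div_iff_mul_le (by norm_num : 0 < 2)]; omega
  set A : PP n d q := ∏ i, X ((e.1, i), h (e.1, i)) with hA
  set B : PP n d q := ∏ j, X (σ.symm ((σ e).1, j), h (σ.symm ((σ e).1, j))) with hB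
  have hdegA : A.totalDegree ≤ d := by
    rw [hA]; simpa using deg_prodX (n := n) (d := d) (q := q) univ
      (fun i => ((e.1, i), h (e.1, i)))
  have hdegB : B.totalDegree ≤ d := by
    rw [hB]; simpa using deg_prodX (n := n) (d := d) (q := q) univ
      (fun j => (σ.symm ((σ e).1, j), h (σ.symm ((σ e).1, j))))
  have hdeg1B : (1 - B).totalDegree ≤ d := by
    calc (1 - B).totalDegree ≤ max (1 : PP n d q).totalDegree (-B).totalDegree := by
          rw [sub_eq_add_neg]; exact totalDegree_add _ _
      _ ≤ d := by rw [totalDegree_one, totalDegree_neg]; simp [hdegB]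
  -- S1
  have hS1 : E (X (e, h e) * A) = E A := by
    have habs := Eabsorb E hbool (w := fun i => ((e.1, i), h (e.1, i))) e.2 1
      (by rw [totalDegree_one]; simp only [Fintype.card_fin]; omega)
    simpa [hA] using habs
  -- S2
  have hS2 : E (X (e, h e) * B) = E B := by
    have habs := Eabsorb E hbool (w := fun j => (σ.symm ((σ e).1, j), h (σ.symm ((σ e).1, j))))
      (σ e).2 1 (by rw [totalDegree_one]; simp only [Fintype.card_fin]; omega)
    simpa [hB] using habs
  -- S3
  have hS3 : E (X (e, h e) * (A * B)) = E (A * B) := by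
    have habs := Eabsorb E hbool (w := fun i => ((e.1, i), h (e.1, i))) e.2 B
      (by simp only [Fintype.card_fin]; omega)
    have h1 : E (B * X ((e.1, e.2), h (e.1, e.2)) * A) = E (B * A) := by
      simpa [hA] using habs
    calc E (X (e, h e) * (A * B)) = E (B * X ((e.1, e.2), h (e.1, e.2)) * A) := by
          congr 1; ring
      _ = E (B * A) := h1
      _ = E (A * B) := by congr 1; ring
  -- positivity
  have hposα : ∀ α : Fin d → Fin q,
      0 ≤ E ((X (e, h e) * (1 - B)) * ∏ i, X ((e.1, i), α i)) := by
    intro α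
    have hZL : (∏ i, X ((e.1, i), α i) : PP n d q).totalDegree ≤ d := by
      simpa using deg_prodX (n := n) (d := d) (q := q) univ (fun i => ((e.1, i), α i))
    have hre : (X (e, h e) * (1 - B)) * ∏ i, X ((e.1, i), α i)
        = (X (e, h e) * ∏ i, X ((e.1, i), α i)) * (1 - B) := by ring
    have hdeg2 : ((X (e, h e) : PP n d q) * ∏ i, X ((e.1, i), α i)).totalDegree + d ≤ t := by
      have h1 := totalDegree_mul (X (e, h e) : PP n d q) (∏ i, X ((e.1, i), α i))
      rw [totalDegree_X] at h1
      omega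
    have hexp2 := EexpandC E hsum (fun j => σ.symm ((σ e).1, j))
      (X (e, h e) * ∏ i, X ((e.1, i), α i)) hdeg2 (fun j => h (σ.symm ((σ e).1, j)))
    rw [← hB] at hexp2
    rw [hre, hexp2]
    refine Finset.sum_nonneg (fun β _ => ?_)
    have hZR : (∏ j, X (σ.symm ((σ e).1, j), β j) : PP n d q).totalDegree ≤ d := by
      simpa using deg_prodX (n := n) (d := d) (q := q) univ
        (fun j => (σ.symm ((σ e).1, j), β j))
    by_cases hc : α e.2 = h e
    · -- absorb the duplicated variable
      have habs := Eabsorb E hbool (w := fun i => ((e.1, i), α i)) e.2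
        (∏ j, X (σ.symm ((σ e).1, j), β j))
        (by simp only [Fintype.card_fin]; omega)
      simp only [hc, Prod.mk.eta] at habs
      have hnn := Emono_nonneg E hsos hbool
        (w := Sum.elim (fun i => ((e.1, i), α i))
          (fun j => (σ.symm ((σ e).1, j), β j))) (s := univ)
        (by simp only [Finset.card_univ, Fintype.card_sum, Fintype.card_fin]; omega)
      rw [Fintype.prod_sum_type] at hnn
      simp only [Sum.elim_inl, Sum.elim_inr] at hnn
      calc (0:ℝ) ≤ E ((∏ i, X ((e.1, i), α i)) * ∏ j, X (σ.symm ((σ e).1, j), β j)) := hnn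
        _ = E ((∏ j, X (σ.symm ((σ e).1, j), β j)) * X (e, h e) * ∏ i, X ((e.1, i), α i)) := by
            rw [habs]; congr 1; ring
        _ = E (X (e, h e) * (∏ i, X ((e.1, i), α i)) * ∏ j, X (σ.symm ((σ e).1, j), β j)) := by
            congr 1; ring
    · -- two distinct symbols on the shared edge
      have hsplit : (∏ i, X ((e.1, i), α i) : PP n d q)
          = X ((e.1, e.2), α e.2) * ∏ i ∈ univ.erase e.2, X ((e.1, i), α i) :=
        (Finset.mul_prod_erase univ _ (mem_univ e.2)).symm
      have hx : ((e.1, e.2) : Fin n × Fin d) = e := rfl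
      have horth := Eorth E hsos hbool hsum (by omega) e
        (j := h e) (k := α e.2) (fun hco => hc hco.symm)
        ((∏ i ∈ univ.erase e.2, X ((e.1, i), α i)) * ∏ j, X (σ.symm ((σ e).1, j), β j))
        ?degorth
      case degorth =>
        have h1 := totalDegree_mul (∏ i ∈ univ.erase e.2, (X ((e.1, i), α i) : PP n d q))
          (∏ j, X (σ.symm ((σ e).1, j), β j))
        have h2 := deg_prodX (n := n) (d := d) (q := q) (univ.erase e.2)
          (fun i => ((e.1, i), α i))
        have h3 : (univ.erase e.2).card ≤ d := by
          refine le_trans (Finset.card_le_card (Finset.erase_subset _ _)) (by simp)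
        omega
      have hre2 : (X (e, h e) : PP n d q) * (∏ i, X ((e.1, i), α i)) * ∏ j, X (σ.symm ((σ e).1, j), β j)
          = ((∏ i ∈ univ.erase e.2, X ((e.1, i), α i)) * ∏ j, X (σ.symm ((σ e).1, j), β j))
            * (X (e, h e) * X (e, α e.2)) := by
        rw [hsplit]; ring
      rw [hre2, horth]
  -- assemble positivity
  have hP0 : 0 ≤ E (X (e, h e) * ((1 - A) * (1 - B))) := by
    have hdegp : ((X (e, h e) : PP n d q) * (1 - B)).totalDegree + d ≤ t := by
      have h1 := totalDegree_mul (X (e, h e) : PP n d q) (1 - B)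
      rw [totalDegree_X] at h1
      omega
    have hexp1 := EexpandC E hsum (fun i => (e.1, i)) (X (e, h e) * (1 - B)) hdegp
      (fun i => h (e.1, i))
    rw [← hA] at hexp1
    have hre : X (e, h e) * ((1 - A) * (1 - B)) = (X (e, h e) * (1 - B)) * (1 - A) := by ring
    rw [hre, hexp1]
    exact Finset.sum_nonneg (fun α _ => hposα α)
  -- final algebra
  have hfinal : E (X (e, h e) * ((1 - A) * (1 - B)))
      = E (X (e, h e)) - E A - E B + E (A * B) := by
    have hid : X (e, h e) * ((1 - A) * (1 - B))
        = X (e, h e) - X (e, h e) * A - X (e, h e) * B + X (e, h e) * (A * B) := by ring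
    rw [hid, map_add, map_sub, map_sub, hS1, hS2, hS3]
  have hrhs : E ((1 - A) * (1 - B)) = 1 - E A - E B + E (A * B) := by
    have hid : (1 - A) * (1 - B) = 1 - A - B + A * B := by ring
    rw [hid, map_add, map_sub, map_sub, hE1]
  rw [hrhs]
  linarith [hP0, hfinal.symm.le]

include hsos in
theorem mixing_bound (hn1 : 1 ≤ n) (hd1 : 1 ≤ d)
    (σ : Fin n × Fin d ≃ Fin n × Fin d) (lam : ℝ) (hlam0 : 0 ≤ lam)
    (hmix : IsMixing n d σ lam)
    (SA SB : Fin n → PP n d q)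
    (hdegSA : ∀ ℓ, (SA ℓ).totalDegree ≤ t / 2)
    (hdegSB : ∀ r, (SB r).totalDegree ≤ t / 2) :
    (∑ e : Fin n × Fin d, E (SA e.1 * SB (σ e).1)) / ((n : ℝ) * d)
      ≤ (∑ ℓ, ∑ r, E (SA ℓ * SB r)) / ((n : ℝ) * n)
        + lam * Real.sqrt ((∑ ℓ, E (SA ℓ * SA ℓ)) / (n : ℝ))
            * Real.sqrt ((∑ r, E (SB r * SB r)) / (n : ℝ)) := by
  classical
  set P : (Fin n ⊕ Fin n) → PP n d q := Sum.elim SA SB with hP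
  have hdegP : ∀ a, (P a).totalDegree ≤ t / 2 := by
    rintro (ℓ | r)
    · exact hdegSA ℓ
    · exact hdegSB r
  set Q : Matrix (Fin n ⊕ Fin n) (Fin n ⊕ Fin n) ℝ :=
    Matrix.of (fun a b => E (P a * P b)) with hQ
  have hQpsd : Q.PosSemidef := by
    refine Matrix.PosSemidef.of_dotProduct_mulVec_nonneg ?_ ?_
    · ext a b
      simp only [hQ, Matrix.conjTranspose_apply, Matrix.of_apply, star_trivial, mul_comm]
    · intro x
      have hexp : (∑ a, x a • P a) ^ 2
          = ∑ a, ∑ b, (x a * x b) • (P a * P b) := by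
        rw [pow_two, Finset.sum_mul_sum]
        refine Finset.sum_congr rfl (fun a _ => Finset.sum_congr rfl (fun b _ => ?_))
        rw [smul_mul_smul_comm]
      have hdeg : (∑ a, x a • P a).totalDegree ≤ t / 2 := by
        refine (totalDegree_finset_sum _ _).trans ?_
        refine Finset.sup_le (fun a _ => ?_)
        exact (totalDegree_smul_le _ _).trans (hdegP a)
      have h0 := hsos _ hdeg
      rw [hexp, map_sum] at h0
      simp only [map_sum, map_smul, smul_eq_mul] at h0
      have hdot : dotProduct (star x) (Q.mulVec x) = ∑ a, ∑ b, x a * x b * E (P a * P b) := by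
        simp only [dotProduct, Matrix.mulVec, dotProduct, hQ, Matrix.of_apply,
          Pi.star_apply, star_trivial, Finset.mul_sum]
        refine Finset.sum_congr rfl (fun a _ => Finset.sum_congr rfl (fun b _ => ?_))
        ring
      rw [hdot]
      exact h0
  obtain ⟨Bm, hBm⟩ : ∃ Bm : Matrix (Fin n ⊕ Fin n) (Fin n ⊕ Fin n) ℝ, Q = Bm.conjTranspose * Bm := by
    open scoped MatrixOrder in exact CStarAlgebra.nonneg_iff_eq_star_mul_self.mp hQpsd.nonneg
  have hentry : ∀ a b, E (P a * P b) = ∑ k, Bm k a * Bm k b := by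
    intro a b
    have : Q a b = (Bm.conjTranspose * Bm) a b := by rw [← hBm]
    simpa [hQ, Matrix.mul_apply, Matrix.conjTranspose_apply, star_trivial] using this
  set F : (Fin n ⊕ Fin n) → Fin n → ℝ := fun k ℓ => Bm k (Sum.inl ℓ) with hF
  set G : (Fin n ⊕ Fin n) → Fin n → ℝ := fun k r => Bm k (Sum.inr r) with hG
  have hedge : ∑ e : Fin n × Fin d, E (SA e.1 * SB (σ e).1)
      = ∑ k, ∑ e : Fin n × Fin d, F k e.1 * G k (σ e).1 := by
    rw [Finset.sum_comm]
    exact Finset.sum_congr rfl (fun e _ => hentry (Sum.inl e.1) (Sum.inr (σ e).1))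
  have hpair : ∑ ℓ, ∑ r, E (SA ℓ * SB r)
      = ∑ k, (∑ ℓ, F k ℓ) * (∑ r, G k r) := by
    have h1 : ∀ ℓ r, E (SA ℓ * SB r) = ∑ k, F k ℓ * G k r :=
      fun ℓ r => hentry (Sum.inl ℓ) (Sum.inr r)
    simp only [h1]
    rw [Finset.sum_congr rfl (fun ℓ _ => Finset.sum_comm (γ := Fin n))]
    rw [Finset.sum_comm]
    refine Finset.sum_congr rfl (fun k _ => ?_)
    rw [Finset.sum_mul_sum]
  have hdiagA : ∑ ℓ, E (SA ℓ * SA ℓ) = ∑ k, ∑ ℓ, (F k ℓ) ^ 2 := by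
    rw [Finset.sum_comm]
    refine Finset.sum_congr rfl (fun ℓ _ => ?_)
    have h2 : E (SA ℓ * SA ℓ) = ∑ k, Bm k (Sum.inl ℓ) * Bm k (Sum.inl ℓ) :=
      hentry (Sum.inl ℓ) (Sum.inl ℓ)
    rw [h2]
    exact Finset.sum_congr rfl (fun k _ => (pow_two _).symm)
  have hdiagB : ∑ r, E (SB r * SB r) = ∑ k, ∑ r, (G k r) ^ 2 := by
    rw [Finset.sum_comm]
    refine Finset.sum_congr rfl (fun r _ => ?_)
    have h2 : E (SB r * SB r) = ∑ k, Bm k (Sum.inr r) * Bm k (Sum.inr r) :=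
      hentry (Sum.inr r) (Sum.inr r)
    rw [h2]
    exact Finset.sum_congr rfl (fun k _ => (pow_two _).symm)
  -- apply the scalar mixing bound coordinatewise
  have hk : ∀ k, (∑ e : Fin n × Fin d, F k e.1 * G k (σ e).1) / ((n : ℝ) * d)
      - ((∑ ℓ, F k ℓ) / (n : ℝ)) * ((∑ r, G k r) / (n : ℝ))
      ≤ lam * (Real.sqrt ((∑ ℓ, F k ℓ ^ 2) / (n : ℝ)) * Real.sqrt ((∑ r, G k r ^ 2) / (n : ℝ))) := by
    intro k
    have := hmix (F k) (G k)
    have h2 := abs_le.mp this |>.2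
    linarith [h2]
  -- Cauchy-Schwarz over coordinates
  set a : (Fin n ⊕ Fin n) → ℝ := fun k => (∑ ℓ, F k ℓ ^ 2) / (n : ℝ) with ha
  set b : (Fin n ⊕ Fin n) → ℝ := fun k => (∑ r, G k r ^ 2) / (n : ℝ) with hb
  have ha0 : ∀ k, 0 ≤ a k := by
    intro k
    exact div_nonneg (Finset.sum_nonneg (fun ℓ _ => sq_nonneg _)) (by positivity)
  have hb0 : ∀ k, 0 ≤ b k := by
    intro k
    exact div_nonneg (Finset.sum_nonneg (fun r _ => sq_nonneg _)) (by positivity)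
  have hCS : ∑ k, Real.sqrt (a k) * Real.sqrt (b k)
      ≤ Real.sqrt (∑ k, a k) * Real.sqrt (∑ k, b k) := by
    have h1 := Finset.sum_mul_sq_le_sq_mul_sq univ (fun k => Real.sqrt (a k))
      (fun k => Real.sqrt (b k))
    simp only [Real.sq_sqrt (ha0 _), Real.sq_sqrt (hb0 _)] at h1
    have h2 : 0 ≤ ∑ k, Real.sqrt (a k) * Real.sqrt (b k) :=
      Finset.sum_nonneg (fun k _ => mul_nonneg (Real.sqrt_nonneg _) (Real.sqrt_nonneg _))
    have h3 : (∑ k, Real.sqrt (a k) * Real.sqrt (b k))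
        ≤ Real.sqrt ((∑ k, a k) * (∑ k, b k)) := by
      rw [← Real.sqrt_sq h2]
      exact Real.sqrt_le_sqrt h1
    rwa [Real.sqrt_mul (Finset.sum_nonneg (fun k _ => ha0 k))] at h3
  -- put everything together
  have hsum_a : ∑ k, a k = (∑ ℓ, E (SA ℓ * SA ℓ)) / (n : ℝ) := by
    rw [hdiagA, ha, ← Finset.sum_div]
  have hsum_b : ∑ k, b k = (∑ r, E (SB r * SB r)) / (n : ℝ) := by
    rw [hdiagB, hb, ← Finset.sum_div]
  have hmain : (∑ e : Fin n × Fin d, E (SA e.1 * SB (σ e).1)) / ((n : ℝ) * d)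
      - (∑ ℓ, ∑ r, E (SA ℓ * SB r)) / ((n : ℝ) * n)
      ≤ lam * (Real.sqrt (∑ k, a k) * Real.sqrt (∑ k, b k)) := by
    have hei : (∑ e : Fin n × Fin d, E (SA e.1 * SB (σ e).1)) / ((n : ℝ) * d)
        = ∑ k, (∑ e : Fin n × Fin d, F k e.1 * G k (σ e).1) / ((n : ℝ) * d) := by
      rw [hedge, Finset.sum_div]
    have hpi : (∑ ℓ, ∑ r, E (SA ℓ * SB r)) / ((n : ℝ) * n)
        = ∑ k, ((∑ ℓ, F k ℓ) / (n : ℝ)) * ((∑ r, G k r) / (n : ℝ)) := by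
      rw [hpair, Finset.sum_div]
      refine Finset.sum_congr rfl (fun k _ => ?_)
      rw [div_mul_div_comm]
    rw [hei, hpi, ← Finset.sum_sub_distrib]
    calc ∑ k, ((∑ e : Fin n × Fin d, F k e.1 * G k (σ e).1) / ((n : ℝ) * d)
            - ((∑ ℓ, F k ℓ) / (n : ℝ)) * ((∑ r, G k r) / (n : ℝ)))
        ≤ ∑ k, lam * (Real.sqrt (a k) * Real.sqrt (b k)) :=
          Finset.sum_le_sum (fun k _ => hk k)
      _ = lam * ∑ k, Real.sqrt (a k) * Real.sqrt (b k) := by rw [← Finset.mul_sum]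
      _ ≤ lam * (Real.sqrt (∑ k, a k) * Real.sqrt (∑ k, b k)) :=
          mul_le_mul_of_nonneg_left hCS hlam0
  rw [hsum_a, hsum_b] at hmain
  linarith [hmain]

end Basic

end TannerAux

set_option maxHeartbeats 3200000

open TannerAux Finset in
/-- **Distance of Tanner codes for `η`-good pseudocodewords.** The distance
`Δ(Ẽ, h) = 𝔼_e [1 − Ẽ[Z_{e,h(e)}]]` between an `η`-good Tanner pseudocodeword and a
codeword `h` is either at most `3η` or at least `δ₀(δ₀ − λ) − 3η`. -/
theorem tanner_pseudocodeword_distance (n d q t : ℕ) (hn : 1 ≤ n) (hd : 1 ≤ d) (hq : 2 ≤ q)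
    (lam δ₀ η : ℝ) (hlam0 : 0 ≤ lam) (hδ₀0 : 0 < δ₀) (hδ₀1 : δ₀ ≤ 1)
    (hlam : lam ≤ δ₀ / 3) (hη0 : 0 ≤ η) (hη : η ≤ δ₀ ^ 2 / 9)
    (σ : Fin n × Fin d ≃ Fin n × Fin d) (hmix : IsMixing n d σ lam)
    (C₀ : Set (Fin d → Fin q))
    (hC₀ : ∀ u ∈ C₀, ∀ v ∈ C₀, u ≠ v → δ₀ * d ≤ (hammingDist u v : ℝ))
    (ht : Even t) (htd : 4 * d ≤ t)
    (E : MvPolynomial ((Fin n × Fin d) × Fin q) ℝ →ₗ[ℝ] ℝ)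
    (hE : IsTannerPseudocodeword n d q t σ C₀ E) (hgood : IsEtaGood n d q σ E η)
    (h : Fin n × Fin d → Fin q)
    (hhL : ∀ ℓ : Fin n, (fun i => h (ℓ, i)) ∈ C₀)
    (hhR : ∀ r : Fin n, (fun j => h (σ.symm (r, j))) ∈ C₀) :
    (∑ e : Fin n × Fin d, (1 - E (X (e, h e)))) / ((n : ℝ) * d) ≤ 3 * η ∨
    δ₀ * (δ₀ - lam) - 3 * η ≤
      (∑ e : Fin n × Fin d, (1 - E (X (e, h e)))) / ((n : ℝ) * d) := by
  classical
  obtain ⟨⟨hE1, hsos, hbool, hsum⟩, hkillL, hkillR⟩ := hE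
  have hn0 : (0 : ℝ) < n := by exact_mod_cast hn
  have hd0 : (0 : ℝ) < d := by exact_mod_cast hd
  have hnd0 : (0 : ℝ) < (n : ℝ) * d := mul_pos hn0 hd0
  have hnn0 : (0 : ℝ) < (n : ℝ) * n := mul_pos hn0 hn0
  have hdt : d ≤ t / 2 := by
    rw [Nat.le_div_iff_mul_le (by norm_num : 0 < 2)]; omega
  set SA : Fin n → PP n d q := fun ℓ => 1 - ZL n d q ℓ (fun i => h (ℓ, i)) with hSA
  set SB : Fin n → PP n d q := fun r => 1 - ZR n d q σ r (fun j => h (σ.symm (r, j))) with hSB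
  set Δ : ℝ := (∑ e : Fin n × Fin d, (1 - E (X (e, h e)))) / ((n : ℝ) * d) with hΔ
  set x : ℝ := (∑ ℓ, E (SA ℓ)) / (n : ℝ) with hx
  set y : ℝ := (∑ r, E (SB r)) / (n : ℝ) with hy
  -- left vertex facts
  have hVL : ∀ ℓ : Fin n, 0 ≤ E (SA ℓ) ∧
      δ₀ * d * E (SA ℓ) ≤ ∑ i, (1 - E (X ((ℓ, i), h (ℓ, i)))) := by
    intro ℓ
    have hkill : ∀ β : Fin d → Fin q, β ∉ C₀ →
        E (∏ i, X ((ℓ, i), β i)) = 0 := by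
      intro β hβ
      have := hkillL ℓ β hβ 1 (by rw [totalDegree_one]; omega)
      simpa [ZL] using this
    have hV := vertex_distance E hE1 hsos hbool hsum hd htd δ₀ hδ₀0.le C₀ hC₀ h
      (fun i => (ℓ, i)) hkill (hhL ℓ)
    have hEA : E (SA ℓ) = 1 - E (ZL n d q ℓ (fun i => h (ℓ, i))) := by
      rw [hSA]; simp only [map_sub, hE1]
    constructor
    · rw [hEA]; exact hV.1
    · rw [hEA]; exact hV.2
  -- right vertex facts
  have hVR : ∀ r : Fin n, 0 ≤ E (SB r) ∧
      δ₀ * d * E (SB r) ≤ ∑ j, (1 - E (X (σ.symm (r, j), h (σ.symm (r, j))))) := by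
    intro r
    have hkill : ∀ β : Fin d → Fin q, β ∉ C₀ →
        E (∏ j, X (σ.symm (r, j), β j)) = 0 := by
      intro β hβ
      have := hkillR r β hβ 1 (by rw [totalDegree_one]; omega)
      simpa [ZR] using this
    have hV := vertex_distance E hE1 hsos hbool hsum hd htd δ₀ hδ₀0.le C₀ hC₀ h
      (fun j => σ.symm (r, j)) hkill (hhR r)
    have hEB : E (SB r) = 1 - E (ZR n d q σ r (fun j => h (σ.symm (r, j)))) := by
      rw [hSB]; simp only [map_sub, hE1]
    constructor
    · rw [hEB]; exact hV.1
    · rw [hEB]; exact hV.2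
  have hx0 : 0 ≤ x := by
    rw [hx]
    exact div_nonneg (Finset.sum_nonneg (fun ℓ _ => (hVL ℓ).1)) hn0.le
  have hy0 : 0 ≤ y := by
    rw [hy]
    exact div_nonneg (Finset.sum_nonneg (fun r _ => (hVR r).1)) hn0.le
  -- Δ ≥ δ₀ x
  have hΔx : δ₀ * x ≤ Δ := by
    have hsumL : δ₀ * d * ∑ ℓ, E (SA ℓ) ≤ ∑ e : Fin n × Fin d, (1 - E (X (e, h e))) := by
      rw [Fintype.sum_prod_type]
      calc δ₀ * d * ∑ ℓ, E (SA ℓ) = ∑ ℓ, δ₀ * d * E (SA ℓ) := by rw [Finset.mul_sum]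
        _ ≤ ∑ ℓ, ∑ i, (1 - E (X ((ℓ, i), h (ℓ, i)))) :=
            Finset.sum_le_sum (fun ℓ _ => (hVL ℓ).2)
    rw [hΔ, hx, ← mul_div_assoc]
    rw [div_le_div_iff₀ hn0 hnd0]
    calc δ₀ * (∑ ℓ, E (SA ℓ)) * ((n : ℝ) * d)
        = (δ₀ * d * ∑ ℓ, E (SA ℓ)) * n := by ring
      _ ≤ (∑ e : Fin n × Fin d, (1 - E (X (e, h e)))) * n :=
          mul_le_mul_of_nonneg_right hsumL hn0.le
  -- Δ ≥ δ₀ y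
  have hΔy : δ₀ * y ≤ Δ := by
    have hsumR : δ₀ * d * ∑ r, E (SB r) ≤ ∑ e : Fin n × Fin d, (1 - E (X (e, h e))) := by
      have hre : ∑ e : Fin n × Fin d, (1 - E (X (e, h e)))
          = ∑ r, ∑ j, (1 - E (X (σ.symm (r, j), h (σ.symm (r, j))))) := by
        rw [← Equiv.sum_comp σ.symm (fun e => 1 - E (X (e, h e)))]
        rw [Fintype.sum_prod_type]
      rw [hre]
      calc δ₀ * d * ∑ r, E (SB r) = ∑ r, δ₀ * d * E (SB r) := by rw [Finset.mul_sum]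
        _ ≤ ∑ r, ∑ j, (1 - E (X (σ.symm (r, j), h (σ.symm (r, j))))) :=
            Finset.sum_le_sum (fun r _ => (hVR r).2)
    rw [hΔ, hy, ← mul_div_assoc]
    rw [div_le_div_iff₀ hn0 hnd0]
    calc δ₀ * (∑ r, E (SB r)) * ((n : ℝ) * d)
        = (δ₀ * d * ∑ r, E (SB r)) * n := by ring
      _ ≤ (∑ e : Fin n × Fin d, (1 - E (X (e, h e)))) * n :=
          mul_le_mul_of_nonneg_right hsumR hn0.le
  have hΔ0 : 0 ≤ Δ := le_trans (by positivity) hΔx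
  -- edge bound
  have hΔedge : Δ ≤ (∑ e : Fin n × Fin d, E (SA e.1 * SB (σ e).1)) / ((n : ℝ) * d) := by
    rw [hΔ]
    refine (div_le_div_iff_of_pos_right hnd0).mpr ?_
    exact Finset.sum_le_sum (fun e _ =>
      edge_bound E hE1 hsos hbool hsum hd htd σ h e)
  -- mixing bound
  have hdegSA : ∀ ℓ, (SA ℓ).totalDegree ≤ t / 2 := by
    intro ℓ
    rw [hSA]
    calc (1 - ZL n d q ℓ (fun i => h (ℓ, i))).totalDegree
        ≤ max (1 : PP n d q).totalDegree (-(ZL n d q ℓ (fun i => h (ℓ, i)))).totalDegree := by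
          rw [sub_eq_add_neg]; exact totalDegree_add _ _
      _ ≤ t / 2 := by
          rw [totalDegree_one, totalDegree_neg]
          have := deg_prodX (n := n) (d := d) (q := q) univ (fun i => ((ℓ, i), h (ℓ, i)))
          simp only [Finset.card_univ, Fintype.card_fin] at this
          exact max_le (by omega) (le_trans this hdt)
  have hdegSB : ∀ r, (SB r).totalDegree ≤ t / 2 := by
    intro r
    rw [hSB]
    calc (1 - ZR n d q σ r (fun j => h (σ.symm (r, j)))).totalDegree
        ≤ max (1 : PP n d q).totalDegree
            (-(ZR n d q σ r (fun j => h (σ.symm (r, j))))).totalDegree := by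
          rw [sub_eq_add_neg]; exact totalDegree_add _ _
      _ ≤ t / 2 := by
          rw [totalDegree_one, totalDegree_neg]
          have := deg_prodX (n := n) (d := d) (q := q) univ
            (fun j => (σ.symm (r, j), h (σ.symm (r, j))))
          simp only [Finset.card_univ, Fintype.card_fin] at this
          exact max_le (by omega) (le_trans this hdt)
  have hmixb := mixing_bound E hsos hn hd σ lam hlam0 hmix SA SB hdegSA hdegSB
  -- diagonal identities
  have hdiagA : ∀ ℓ, E (SA ℓ * SA ℓ) = E (SA ℓ) := by
    intro ℓ
    have hsq : E ((ZL n d q ℓ (fun i => h (ℓ, i))) ^ 2)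
        = E (ZL n d q ℓ (fun i => h (ℓ, i))) := by
      have := Esq_prod E hbool (w := fun i => ((ℓ, i), h (ℓ, i))) (s := univ) 1
        (by rw [totalDegree_one]; simp only [Finset.card_univ, Fintype.card_fin]; omega)
      simpa [ZL] using this
    have hid : SA ℓ * SA ℓ = 1 - ZL n d q ℓ (fun i => h (ℓ, i))
        - ZL n d q ℓ (fun i => h (ℓ, i)) + (ZL n d q ℓ (fun i => h (ℓ, i))) ^ 2 := by
      rw [hSA]; ring
    rw [hid]
    simp only [map_add, map_sub, hE1, hsq, hSA, map_sub]
    ring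
  have hdiagB : ∀ r, E (SB r * SB r) = E (SB r) := by
    intro r
    have hsq : E ((ZR n d q σ r (fun j => h (σ.symm (r, j)))) ^ 2)
        = E (ZR n d q σ r (fun j => h (σ.symm (r, j)))) := by
      have := Esq_prod E hbool (w := fun j => (σ.symm (r, j), h (σ.symm (r, j)))) (s := univ) 1
        (by rw [totalDegree_one]; simp only [Finset.card_univ, Fintype.card_fin]; omega)
      simpa [ZR] using this
    have hid : SB r * SB r = 1 - ZR n d q σ r (fun j => h (σ.symm (r, j)))
        - ZR n d q σ r (fun j => h (σ.symm (r, j)))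
        + (ZR n d q σ r (fun j => h (σ.symm (r, j)))) ^ 2 := by
      rw [hSB]; ring
    rw [hid]
    simp only [map_add, map_sub, hE1, hsq, hSB, map_sub]
    ring
  have hdiagA' : (∑ ℓ, E (SA ℓ * SA ℓ)) / (n : ℝ) = x := by
    rw [hx]; congr 1; exact Finset.sum_congr rfl (fun ℓ _ => hdiagA ℓ)
  have hdiagB' : (∑ r, E (SB r * SB r)) / (n : ℝ) = y := by
    rw [hy]; congr 1; exact Finset.sum_congr rfl (fun r _ => hdiagB r)
  rw [hdiagA', hdiagB'] at hmixb
  -- pair bound via η-goodness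
  have hpairη : (∑ ℓ, ∑ r, E (SA ℓ * SB r)) / ((n : ℝ) * n) ≤ x * y + η := by
    have hsingle : ∀ ℓ r, E (SA ℓ * SB r) ≤ E (SA ℓ) * E (SB r)
        + ∑ α : Fin d → Fin q, ∑ β : Fin d → Fin q,
          |E (ZL n d q ℓ α * ZR n d q σ r β) - E (ZL n d q ℓ α) * E (ZR n d q σ r β)| := by
      intro ℓ r
      have hid : E (SA ℓ * SB r) - E (SA ℓ) * E (SB r)
          = E (ZL n d q ℓ (fun i => h (ℓ, i)) * ZR n d q σ r (fun j => h (σ.symm (r, j))))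
            - E (ZL n d q ℓ (fun i => h (ℓ, i))) * E (ZR n d q σ r (fun j => h (σ.symm (r, j)))) := by
        have hid2 : SA ℓ * SB r = 1 - ZL n d q ℓ (fun i => h (ℓ, i))
            - ZR n d q σ r (fun j => h (σ.symm (r, j)))
            + ZL n d q ℓ (fun i => h (ℓ, i)) * ZR n d q σ r (fun j => h (σ.symm (r, j))) := by
          rw [hSA, hSB]; ring
        rw [hid2]
        simp only [map_add, map_sub, hE1, hSA, hSB, map_sub]
        ring
      have habs : E (ZL n d q ℓ (fun i => h (ℓ, i)) * ZR n d q σ r (fun j => h (σ.symm (r, j))))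
          - E (ZL n d q ℓ (fun i => h (ℓ, i))) * E (ZR n d q σ r (fun j => h (σ.symm (r, j))))
          ≤ ∑ α : Fin d → Fin q, ∑ β : Fin d → Fin q,
            |E (ZL n d q ℓ α * ZR n d q σ r β) - E (ZL n d q ℓ α) * E (ZR n d q σ r β)| := by
        refine le_trans (le_abs_self _) ?_
        have step1 : |E (ZL n d q ℓ (fun i => h (ℓ, i)) * ZR n d q σ r (fun j => h (σ.symm (r, j))))
            - E (ZL n d q ℓ (fun i => h (ℓ, i))) * E (ZR n d q σ r (fun j => h (σ.symm (r, j))))|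
            ≤ ∑ β : Fin d → Fin q,
              |E (ZL n d q ℓ (fun i => h (ℓ, i)) * ZR n d q σ r β)
                - E (ZL n d q ℓ (fun i => h (ℓ, i))) * E (ZR n d q σ r β)| :=
          Finset.single_le_sum (f := fun β : Fin d → Fin q =>
              |E (ZL n d q ℓ (fun i => h (ℓ, i)) * ZR n d q σ r β)
                - E (ZL n d q ℓ (fun i => h (ℓ, i))) * E (ZR n d q σ r β)|)
            (fun β _ => abs_nonneg _) (Finset.mem_univ _)
        have step2 : ∑ β : Fin d → Fin q,
              |E (ZL n d q ℓ (fun i => h (ℓ, i)) * ZR n d q σ r β)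
                - E (ZL n d q ℓ (fun i => h (ℓ, i))) * E (ZR n d q σ r β)|
            ≤ ∑ α : Fin d → Fin q, ∑ β : Fin d → Fin q,
              |E (ZL n d q ℓ α * ZR n d q σ r β) - E (ZL n d q ℓ α) * E (ZR n d q σ r β)| :=
          Finset.single_le_sum (f := fun α : Fin d → Fin q => ∑ β : Fin d → Fin q,
              |E (ZL n d q ℓ α * ZR n d q σ r β) - E (ZL n d q ℓ α) * E (ZR n d q σ r β)|)
            (fun α _ => Finset.sum_nonneg (fun β _ => abs_nonneg _)) (Finset.mem_univ _)
        exact le_trans step1 step2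
      linarith [hid, habs]
    have hT : ∑ ℓ, ∑ r, E (SA ℓ * SB r)
        ≤ (∑ ℓ, E (SA ℓ)) * (∑ r, E (SB r)) + η * ((n : ℝ) * n) := by
      have h1 : ∑ ℓ, ∑ r, E (SA ℓ * SB r)
          ≤ ∑ ℓ, ∑ r, (E (SA ℓ) * E (SB r)
            + ∑ α : Fin d → Fin q, ∑ β : Fin d → Fin q,
              |E (ZL n d q ℓ α * ZR n d q σ r β) - E (ZL n d q ℓ α) * E (ZR n d q σ r β)|) :=
        Finset.sum_le_sum (fun ℓ _ => Finset.sum_le_sum (fun r _ => hsingle ℓ r))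
      have h2 : ∑ ℓ, ∑ r, (E (SA ℓ) * E (SB r)
            + ∑ α : Fin d → Fin q, ∑ β : Fin d → Fin q,
              |E (ZL n d q ℓ α * ZR n d q σ r β) - E (ZL n d q ℓ α) * E (ZR n d q σ r β)|)
          = (∑ ℓ, E (SA ℓ)) * (∑ r, E (SB r))
            + ∑ ℓ, ∑ r, ∑ α : Fin d → Fin q, ∑ β : Fin d → Fin q,
              |E (ZL n d q ℓ α * ZR n d q σ r β) - E (ZL n d q ℓ α) * E (ZR n d q σ r β)| := by
        rw [Finset.sum_mul_sum]
        rw [← Finset.sum_add_distrib]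
        refine Finset.sum_congr rfl (fun ℓ _ => ?_)
        rw [← Finset.sum_add_distrib]
      have h3 : ∑ ℓ, ∑ r, ∑ α : Fin d → Fin q, ∑ β : Fin d → Fin q,
            |E (ZL n d q ℓ α * ZR n d q σ r β) - E (ZL n d q ℓ α) * E (ZR n d q σ r β)|
          ≤ η * ((n : ℝ) * n) := by
        have := hgood
        rw [IsEtaGood, div_le_iff₀ hnn0] at this
        exact this
      linarith [h1, h2.le, h2.ge, h3]
    rw [div_le_iff₀ hnn0]
    calc ∑ ℓ, ∑ r, E (SA ℓ * SB r)
        ≤ (∑ ℓ, E (SA ℓ)) * (∑ r, E (SB r)) + η * ((n : ℝ) * n) := hT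
      _ = (x * y + η) * ((n : ℝ) * n) := by
          have hxy : x * y * ((n : ℝ) * n) = (∑ ℓ, E (SA ℓ)) * (∑ r, E (SB r)) := by
            rw [hx, hy]; field_simp
          linear_combination -hxy
  -- main inequality
  have hkey : Δ ≤ x * y + η + lam * (Real.sqrt x * Real.sqrt y) := by
    calc Δ ≤ (∑ e : Fin n × Fin d, E (SA e.1 * SB (σ e).1)) / ((n : ℝ) * d) := hΔedge
      _ ≤ (∑ ℓ, ∑ r, E (SA ℓ * SB r)) / ((n : ℝ) * n)
          + lam * Real.sqrt x * Real.sqrt y := hmixb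
      _ ≤ x * y + η + lam * (Real.sqrt x * Real.sqrt y) := by
          have h5 := hpairη
          have h6 : 0 ≤ lam * Real.sqrt x * Real.sqrt y - lam * (Real.sqrt x * Real.sqrt y) := by
            ring_nf; exact le_refl 0
          linarith only [h5, h6]
  -- endgame
  clear_value Δ x y
  clear * - hΔx hΔy hΔ0 hx0 hy0 hkey hη0 hη hδ₀0 hδ₀1 hlam hlam0
  set z : ℝ := Real.sqrt x * Real.sqrt y with hz
  have hz0 : 0 ≤ z := mul_nonneg (Real.sqrt_nonneg _) (Real.sqrt_nonneg _)
  have hz2 : z ^ 2 = x * y := by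
    rw [hz, mul_pow, Real.sq_sqrt hx0, Real.sq_sqrt hy0]
  have hΔz : δ₀ * z ≤ Δ := by
    have hmul : (δ₀ * x) * (δ₀ * y) ≤ Δ * Δ :=
      mul_le_mul hΔx hΔy (mul_nonneg hδ₀0.le hy0) hΔ0
    have hzΔ : 0 ≤ δ₀ * z + Δ := add_nonneg (mul_nonneg hδ₀0.le hz0) hΔ0
    nlinarith [hmul, hz2, hzΔ]
  have hkey2 : Δ ≤ z ^ 2 + lam * z + η := by
    rw [hz2]
    linarith only [hkey]
  have hσpos : 0 < δ₀ - lam := by linarith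
  have hσ3 : 2 * δ₀ ≤ 3 * (δ₀ - lam) := by linarith
  by_cases hcase : (δ₀ - lam) * z ≤ 2 * η
  · left
    have k1 : 2 * δ₀ / 3 ≤ δ₀ - lam := by linarith
    have k2 : δ₀ / 3 ≤ δ₀ - 2 * lam := by linarith
    have k3 : 2 * η ≤ (δ₀ - lam) * (δ₀ - 2 * lam) := by nlinarith [k1, k2, hη, hδ₀0]
    have hW : z ^ 2 + lam * z ≤ 2 * η := by
      nlinarith [hcase, k3, hz0, hη0, hσpos.le, hlam0,
        mul_le_mul_of_nonneg_right hcase hz0,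
        mul_le_mul_of_nonneg_left hcase hlam0,
        mul_nonneg (mul_nonneg hσpos.le hσpos.le) hz0,
        sq_nonneg ((δ₀ - lam) * z - 2 * η)]
    calc Δ ≤ z ^ 2 + lam * z + η := hkey2
      _ ≤ 3 * η := by linarith
  · right
    push_neg at hcase
    have hA : z ^ 2 - (δ₀ - lam) * z + η ≥ 0 := by linarith [hΔz, hkey2]
    have k1 : 2 * δ₀ / 3 ≤ δ₀ - lam := by linarith
    have h4η : 4 * η ≤ (δ₀ - lam) ^ 2 := by nlinarith [k1, hη, hδ₀0]
    have hzlow : (δ₀ - lam) ^ 2 - 2 * η ≤ (δ₀ - lam) * z := by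
      by_contra hq
      push_neg at hq
      have hpos1 : 0 < (δ₀ - lam) * z - 2 * η := by linarith
      have hpos2 : 0 < (δ₀ - lam) ^ 2 - 2 * η - (δ₀ - lam) * z := by linarith
      nlinarith [mul_pos hpos1 hpos2, hA, h4η, hη0,
        mul_nonneg (mul_nonneg hσpos.le hσpos.le) hA.le]
    -- conclude
    have hfin : (δ₀ * (δ₀ - lam) - 3 * η) * (δ₀ - lam) ≤ Δ * (δ₀ - lam) := by
      have e1 : δ₀ * ((δ₀ - lam) ^ 2 - 2 * η) ≤ δ₀ * ((δ₀ - lam) * z) :=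
        mul_le_mul_of_nonneg_left hzlow hδ₀0.le
      have e2 : (δ₀ - lam) * (δ₀ * z) ≤ (δ₀ - lam) * Δ :=
        mul_le_mul_of_nonneg_left hΔz hσpos.le
      nlinarith [e1, e2, hη0, hσ3, hδ₀0.le]
    have := le_of_mul_le_mul_right (by linarith [hfin] :
      (δ₀ * (δ₀ - lam) - 3 * η) * (δ₀ - lam) ≤ Δ * (δ₀ - lam)) hσpos
    linarith [this]
end

section
/- (AEL distance amplification for η-good pseudocodewords) Let n, d ≥ 1, q ≥ 2, λ ≥ 0, η ≥ 0, let σ : Fin n × Fin d ≃ Fin n × Fin d be a bijection specifying a d-regular bipartite graph that is λ-mixing, let C₀ ⊆ (Fin d → Fin q) be a code in which any two distinct codewords differ in at least δ₀·d coordinates (0 ≤ δ₀ ≤ 1), let t ≥ 4d be even, let Ẽ be a degree-t AEL pseudocodeword with respect to σ and C₀ that is η-good, and let h : Fin n × Fin d → Fin q be a word all of whose left rows lie in C₀. Define Δ^L(Ẽ,h) := 𝔼_{ℓ ∈ Fin n}[1 − Ẽ[Z_{N_L(ℓ),h_L(ℓ)}]] and Δ^R(Ẽ,h) := 𝔼_{r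 ∈ Fin n}[1 − Ẽ[Z_{N_R(r),h_R(r)}]], where h_L(ℓ) is the left row of h at ℓ and h_R(r) is the right row of h at r. If Δ^L(Ẽ,h) > 0, then Δ^R(Ẽ,h) ≥ δ₀ − (λ + η)/Δ^L(Ẽ,h). -/
open MvPolynomial

/-- A degree-`t` AEL pseudocodeword: a degree-`t` pseudoexpectation that in addition
respects the inner-code constraints on every left neighborhood. -/
def IsAELPseudocodeword (n d q t : ℕ) (C₀ : Set (Fin d → Fin q))
    (E : MvPolynomial ((Fin n × Fin d) × Fin q) ℝ →ₗ[ℝ] ℝ) : Prop :=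
  IsPseudoExpectation n d q t E ∧
  (∀ (ℓ : Fin n) (α : Fin d → Fin q), α ∉ C₀ →
    ∀ p : MvPolynomial ((Fin n × Fin d) × Fin q) ℝ,
      p.totalDegree + d ≤ t → E (p * ZL n d q ℓ α) = 0)

/-- Left distance `Δ^L(Ẽ, h) = 𝔼_ℓ [1 − Ẽ[Z_{N_L(ℓ), h_L(ℓ)}]]`. -/
noncomputable def deltaLPE (n d q : ℕ)
    (E : MvPolynomial ((Fin n × Fin d) × Fin q) ℝ →ₗ[ℝ] ℝ)
    (h : Fin n × Fin d → Fin q) : ℝ :=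
  (∑ ℓ : Fin n, (1 - E (ZL n d q ℓ (fun i => h (ℓ, i))))) / n

/-- Right distance `Δ^R(Ẽ, h) = 𝔼_r [1 − Ẽ[Z_{N_R(r), h_R(r)}]]`. -/
noncomputable def deltaRPE (n d q : ℕ) (σ : Fin n × Fin d ≃ Fin n × Fin d)
    (E : MvPolynomial ((Fin n × Fin d) × Fin q) ℝ →ₗ[ℝ] ℝ)
    (h : Fin n × Fin d → Fin q) : ℝ :=
  (∑ r : Fin n, (1 - E (ZR n d q σ r (fun j => h (σ.symm (r, j)))))) / n

namespace AELaux


variable {n d q t : ℕ}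

abbrev PL (n d q : ℕ) := MvPolynomial ((Fin n × Fin d) × Fin q) ℝ

noncomputable def mon (s : Multiset ((Fin n × Fin d) × Fin q)) : PL n d q :=
  (s.map X).prod

@[simp] lemma mon_zero : mon (0 : Multiset ((Fin n × Fin d) × Fin q)) = 1 := by simp [mon]

@[simp] lemma mon_cons (a : (Fin n × Fin d) × Fin q) (s : Multiset ((Fin n × Fin d) × Fin q)) :
    mon (a ::ₘ s) = X a * mon s := by simp [mon]

lemma mon_add (s u : Multiset ((Fin n × Fin d) × Fin q)) :
    mon (s + u) = mon s * mon u := by simp [mon]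

lemma totalDegree_mon (s : Multiset ((Fin n × Fin d) × Fin q)) :
    (mon s).totalDegree ≤ Multiset.card s := by
  induction s using Multiset.induction_on with
  | empty => simp
  | cons a s ih =>
      rw [mon_cons]
      refine le_trans (totalDegree_mul _ _) ?_
      rw [totalDegree_X, Multiset.card_cons]
      omega

lemma prod_X_eq_mon {ι : Type*} (s : Finset ι) (v : ι → (Fin n × Fin d) × Fin q) :
    (∏ i ∈ s, (X (v i) : PL n d q)) = mon (s.val.map v) := by
  rw [Finset.prod_eq_multiset_prod, mon, Multiset.map_map]
  rfl

section Ered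
variable (E : PL n d q →ₗ[ℝ] ℝ)

/-- Booleanity hypothesis. -/
def HB (n d q t : ℕ) (E : PL n d q →ₗ[ℝ] ℝ) : Prop :=
  ∀ (e : Fin n × Fin d) (j : Fin q) (p : PL n d q),
    p.totalDegree + 2 ≤ t → E (p * (X (e, j) ^ 2 - X (e, j))) = 0

/-- Positivity hypothesis. -/
def HS (n d q t : ℕ) (E : PL n d q →ₗ[ℝ] ℝ) : Prop :=
  ∀ p : PL n d q, p.totalDegree ≤ t / 2 → 0 ≤ E (p ^ 2)

/-- Sum-to-one hypothesis. -/
def H1 (n d q t : ℕ) (E : PL n d q →ₗ[ℝ] ℝ) : Prop :=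
  ∀ (e : Fin n × Fin d) (p : PL n d q),
    p.totalDegree + 1 ≤ t → E (p * ((∑ j : Fin q, X (e, j)) - 1)) = 0

lemma red_pow (hb : HB n d q t E) (x : (Fin n × Fin d) × Fin q) (p : PL n d q)
    (hp : p.totalDegree + 2 ≤ t) : E (p * X x ^ 2) = E (p * X x) := by
  have h := hb x.1 x.2 p hp
  rw [Prod.mk.eta, mul_sub, map_sub, sub_eq_zero] at h
  exact h

lemma red_mon_sq (hb : HB n d q t E) (s : Multiset ((Fin n × Fin d) × Fin q)) (w : PL n d q)
    (hw : w.totalDegree + 2 * Multiset.card s ≤ t) :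
    E (w * (mon s * mon s)) = E (w * mon s) := by
  induction s using Multiset.induction_on generalizing w with
  | empty => simp
  | cons a s ih =>
      rw [Multiset.card_cons] at hw
      have hdm : (w * (mon s * mon s)).totalDegree ≤ w.totalDegree + 2 * Multiset.card s := by
        refine le_trans (totalDegree_mul _ _) ?_
        have := totalDegree_mul (mon s) (mon s)
        have := totalDegree_mon (n := n) (d := d) (q := q) s
        omega
      have h1 : w * (mon (a ::ₘ s) * mon (a ::ₘ s)) = (w * (mon s * mon s)) * X a ^ 2 := by
        rw [mon_cons]; ring
      rw [h1, red_pow E hb a _ (by omega)]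
      have h2 : (w * (mon s * mon s)) * X a = (w * X a) * (mon s * mon s) := by ring
      rw [h2, ih (w * X a) ?deg, mon_cons]
      · ring_nf
      case deg =>
        have := totalDegree_mul w (X a : PL n d q)
        rw [totalDegree_X] at this
        omega

lemma mon_nonneg (hb : HB n d q t E) (hsq : HS n d q t E)
    (s : Multiset ((Fin n × Fin d) × Fin q)) (hs : 2 * Multiset.card s ≤ t) :
    0 ≤ E (mon s) := by
  have h1 : E (mon s ^ 2) = E (mon s) := by
    have := red_mon_sq E hb s 1 (by simpa using hs)
    simpa [sq] using this
  rw [← h1]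
  exact hsq _ (le_trans (totalDegree_mon s) (by omega))

lemma red_sum (h1 : H1 n d q t E) (e : Fin n × Fin d) (p : PL n d q)
    (hp : p.totalDegree + 1 ≤ t) : E (p * ∑ j : Fin q, X (e, j)) = E p := by
  have h := h1 e p hp
  rw [mul_sub, mul_one, map_sub, sub_eq_zero] at h
  exact h

lemma totalDegree_sumX (e : Fin n × Fin d) :
    (∑ j : Fin q, (X (e, j) : PL n d q)).totalDegree ≤ 1 := by
  refine le_trans (totalDegree_finset_sum _ _) ?_
  exact Finset.sup_le fun j _ => le_of_eq (totalDegree_X _)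

lemma totalDegree_prodsum (s : Multiset (Fin n × Fin d)) :
    ((s.map (fun e => ∑ j : Fin q, (X (e, j) : PL n d q))).prod).totalDegree
      ≤ Multiset.card s := by
  induction s using Multiset.induction_on with
  | empty => simp
  | cons a s ih =>
      rw [Multiset.map_cons, Multiset.prod_cons]
      refine le_trans (totalDegree_mul _ _) ?_
      have := totalDegree_sumX (n := n) (d := d) (q := q) a
      rw [Multiset.card_cons]
      omega

lemma red_prod_sum (h1 : H1 n d q t E) (s : Multiset (Fin n × Fin d)) (w : PL n d q)
    (hw : w.totalDegree + Multiset.card s ≤ t) :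
    E (w * (s.map (fun e => ∑ j : Fin q, X (e, j))).prod) = E w := by
  induction s using Multiset.induction_on generalizing w with
  | empty => simp
  | cons a s ih =>
      rw [Multiset.card_cons] at hw
      rw [Multiset.map_cons, Multiset.prod_cons]
      have h2 : w * ((∑ j : Fin q, (X (a, j) : PL n d q)) *
          (s.map (fun e => ∑ j : Fin q, X (e, j))).prod)
          = (w * (s.map (fun e => ∑ j : Fin q, X (e, j))).prod) * ∑ j : Fin q, X (a, j) := by
        ring
      rw [h2, red_sum E h1 a _ ?deg]
      · exact ih w (by omega)
      case deg =>
        have := totalDegree_mul w ((s.map (fun e => ∑ j : Fin q, (X (e, j) : PL n d q))).prod)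
        have := totalDegree_prodsum (n := n) (d := d) (q := q) s
        omega

lemma red_orth (hb : HB n d q t E) (hsq : HS n d q t E) (h1 : H1 n d q t E)
    (s : Multiset ((Fin n × Fin d) × Fin q)) (e : Fin n × Fin d) (a b : Fin q)
    (hab : a ≠ b) (hdeg : 2 * Multiset.card s + 4 ≤ t) :
    E (mon s * (X (e, a) * X (e, b))) = 0 := by
  have hdm := totalDegree_mon (n := n) (d := d) (q := q) s
  have key : ∑ c : Fin q, E (mon s * (X (e, a) * X (e, c))) = E (mon s * X (e, a)) := by
    have hrw : ∑ c : Fin q, mon (n := n) (d := d) (q := q) s * (X (e, a) * X (e, c))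
        = (mon s * X (e, a)) * ∑ c : Fin q, X (e, c) := by
      rw [Finset.mul_sum]
      exact Finset.sum_congr rfl fun c _ => by ring
    rw [← map_sum, hrw, red_sum E h1 e _ ?deg]
    case deg =>
      have := totalDegree_mul (mon (n := n) (d := d) (q := q) s) (X (e, a) : PL n d q)
      rw [totalDegree_X] at this
      omega
  have ha : E (mon (n := n) (d := d) (q := q) s * (X (e, a) * X (e, a)))
      = E (mon s * X (e, a)) := by
    rw [← sq]
    exact red_pow E hb (e, a) _ (by omega)
  have hz : ∑ c ∈ Finset.univ.erase a, E (mon (n := n) (d := d) (q := q) s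
      * (X (e, a) * X (e, c))) = 0 := by
    have := Finset.sum_erase_add Finset.univ
      (fun c => E (mon (n := n) (d := d) (q := q) s * (X (e, a) * X (e, c))))
      (Finset.mem_univ a)
    rw [ha] at this
    linarith [key, this]
  have hnn : ∀ c ∈ Finset.univ.erase a,
      0 ≤ E (mon (n := n) (d := d) (q := q) s * (X (e, a) * X (e, c))) := by
    intro c _
    have hm : mon (n := n) (d := d) (q := q) s * (X (e, a) * X (e, c))
        = mon ((e, a) ::ₘ (e, c) ::ₘ s) := by
      rw [mon_cons, mon_cons]; ring
    rw [hm]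
    exact mon_nonneg E hb hsq _ (by simp [Multiset.card_cons]; omega)
  have := (Finset.sum_eq_zero_iff_of_nonneg hnn).mp hz b (Finset.mem_erase.mpr ⟨hab.symm, Finset.mem_univ b⟩)
  exact this

end Ered
section Facts
variable {n d q t : ℕ} (σ : Fin n × Fin d ≃ Fin n × Fin d) (E : PL n d q →ₗ[ℝ] ℝ)

def mL (ℓ : Fin n) (α : Fin d → Fin q) : Multiset ((Fin n × Fin d) × Fin q) :=
  Finset.univ.val.map fun i : Fin d => ((ℓ, i), α i)

def mR (r : Fin n) (β : Fin d → Fin q) : Multiset ((Fin n × Fin d) × Fin q) :=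
  Finset.univ.val.map fun j : Fin d => (σ.symm (r, j), β j)

lemma ZL_eq_mon (ℓ : Fin n) (α : Fin d → Fin q) : ZL n d q ℓ α = mon (mL ℓ α) :=
  prod_X_eq_mon _ _

lemma ZR_eq_mon (r : Fin n) (β : Fin d → Fin q) : ZR n d q σ r β = mon (mR σ r β) :=
  prod_X_eq_mon _ _

@[simp] lemma card_mL (ℓ : Fin n) (α : Fin d → Fin q) : Multiset.card (mL ℓ α) = d := by
  simp [mL]

@[simp] lemma card_mR (r : Fin n) (β : Fin d → Fin q) : Multiset.card (mR σ r β) = d := by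
  simp [mR]

lemma totalDegree_ZL (ℓ : Fin n) (α : Fin d → Fin q) : (ZL n d q ℓ α).totalDegree ≤ d := by
  rw [ZL_eq_mon]
  simpa using totalDegree_mon (mL ℓ α)

lemma totalDegree_ZR (r : Fin n) (β : Fin d → Fin q) :
    (ZR n d q σ r β).totalDegree ≤ d := by
  rw [ZR_eq_mon]
  simpa using totalDegree_mon (mR σ r β)

lemma L_nonneg (hb : HB n d q t E) (hsq : HS n d q t E) (htd : 4 * d ≤ t)
    (ℓ : Fin n) (α : Fin d → Fin q) : 0 ≤ E (ZL n d q ℓ α) := by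
  rw [ZL_eq_mon]
  exact mon_nonneg E hb hsq _ (by simp; omega)

lemma R_nonneg (hb : HB n d q t E) (hsq : HS n d q t E) (htd : 4 * d ≤ t)
    (r : Fin n) (β : Fin d → Fin q) : 0 ≤ E (ZR n d q σ r β) := by
  rw [ZR_eq_mon]
  exact mon_nonneg E hb hsq _ (by simp; omega)

lemma P_nonneg (hb : HB n d q t E) (hsq : HS n d q t E) (htd : 4 * d ≤ t)
    (ℓ : Fin n) (α : Fin d → Fin q) (r : Fin n) (β : Fin d → Fin q) :
    0 ≤ E (ZL n d q ℓ α * ZR n d q σ r β) := by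
  rw [ZL_eq_mon, ZR_eq_mon, ← mon_add]
  exact mon_nonneg E hb hsq _ (by simp [Multiset.card_add]; omega)

lemma red_prod_sum_fin (h1 : H1 n d q t E) (ed : Fin d → Fin n × Fin d) (w : PL n d q)
    (hw : w.totalDegree + d ≤ t) :
    E (w * ∏ i : Fin d, ∑ j : Fin q, X (ed i, j)) = E w := by
  have hrw : (∏ i : Fin d, ∑ j : Fin q, (X (ed i, j) : PL n d q))
      = ((Finset.univ.val.map ed).map (fun e => ∑ j : Fin q, X (e, j))).prod := by
    rw [Finset.prod_eq_multiset_prod, Multiset.map_map]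
    rfl
  rw [hrw]
  exact red_prod_sum E h1 _ w (by simpa using hw)

lemma sum_ZL (ℓ : Fin n) :
    (∑ α : Fin d → Fin q, ZL n d q ℓ α) = ∏ i : Fin d, ∑ j : Fin q, X ((ℓ, i), j) := by
  rw [Finset.prod_univ_sum]
  rw [Fintype.piFinset_univ]
  rfl

lemma sum_ZR (r : Fin n) :
    (∑ β : Fin d → Fin q, ZR n d q σ r β)
      = ∏ j : Fin d, ∑ c : Fin q, X (σ.symm (r, j), c) := by
  rw [Finset.prod_univ_sum]
  rw [Fintype.piFinset_univ]
  rfl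

lemma sum_L_eq_one (h1 : H1 n d q t E) (hone : E 1 = 1) (htd : 4 * d ≤ t) (ℓ : Fin n) :
    ∑ α : Fin d → Fin q, E (ZL n d q ℓ α) = 1 := by
  rw [← map_sum, sum_ZL]
  have := red_prod_sum_fin E h1 (fun i => (ℓ, i)) 1 (by simp; omega)
  rw [one_mul] at this
  rw [this, hone]

lemma sum_R_eq_one (h1 : H1 n d q t E) (hone : E 1 = 1) (htd : 4 * d ≤ t) (r : Fin n) :
    ∑ β : Fin d → Fin q, E (ZR n d q σ r β) = 1 := by
  rw [← map_sum, sum_ZR]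
  have := red_prod_sum_fin E h1 (fun j => σ.symm (r, j)) 1 (by simp; omega)
  rw [one_mul] at this
  rw [this, hone]

lemma marginal_L (h1 : H1 n d q t E) (htd : 4 * d ≤ t) (ℓ : Fin n) (α : Fin d → Fin q)
    (r : Fin n) :
    ∑ β : Fin d → Fin q, E (ZL n d q ℓ α * ZR n d q σ r β) = E (ZL n d q ℓ α) := by
  rw [← map_sum, ← Finset.mul_sum, sum_ZR]
  exact red_prod_sum_fin E h1 (fun j => σ.symm (r, j)) _
    (le_trans (add_le_add_left (totalDegree_ZL ℓ α) d) (by omega))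

lemma sq_ZL (hb : HB n d q t E) (htd : 4 * d ≤ t) (ℓ : Fin n) (α : Fin d → Fin q) :
    E (ZL n d q ℓ α * ZL n d q ℓ α) = E (ZL n d q ℓ α) := by
  rw [ZL_eq_mon]
  have := red_mon_sq E hb (mL ℓ α) 1 (by simp; omega)
  simpa using this

lemma sq_ZR (hb : HB n d q t E) (htd : 4 * d ≤ t) (r : Fin n) (β : Fin d → Fin q) :
    E (ZR n d q σ r β * ZR n d q σ r β) = E (ZR n d q σ r β) := by
  rw [ZR_eq_mon]
  have := red_mon_sq E hb (mR σ r β) 1 (by simp; omega)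
  simpa using this

lemma orth_ZL (hb : HB n d q t E) (hsq : HS n d q t E) (h1 : H1 n d q t E)
    (hd : 1 ≤ d) (htd : 4 * d ≤ t) (ℓ : Fin n) (α α' : Fin d → Fin q) (hne : α ≠ α') :
    E (ZL n d q ℓ α * ZL n d q ℓ α') = 0 := by
  obtain ⟨i, hi⟩ := Function.ne_iff.mp hne
  have e1 : ZL n d q ℓ α = X ((ℓ, i), α i)
      * mon ((Finset.univ.erase i).val.map fun i' => ((ℓ, i'), α i')) := by
    rw [ZL, ← Finset.mul_prod_erase _ _ (Finset.mem_univ i), prod_X_eq_mon]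
  have e2 : ZL n d q ℓ α' = X ((ℓ, i), α' i)
      * mon ((Finset.univ.erase i).val.map fun i' => ((ℓ, i'), α' i')) := by
    rw [ZL, ← Finset.mul_prod_erase _ _ (Finset.mem_univ i), prod_X_eq_mon]
  have e3 : ZL n d q ℓ α * ZL n d q ℓ α'
      = mon (((Finset.univ.erase i).val.map fun i' => ((ℓ, i'), α i'))
          + ((Finset.univ.erase i).val.map fun i' => ((ℓ, i'), α' i')))
        * (X ((ℓ, i), α i) * X ((ℓ, i), α' i)) := by
    rw [e1, e2, mon_add]; ring
  rw [e3]
  refine red_orth E hb hsq h1 _ _ _ _ hi ?_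
  simp [Multiset.card_add, Finset.card_erase_of_mem]
  omega

lemma orth_ZR (hb : HB n d q t E) (hsq : HS n d q t E) (h1 : H1 n d q t E)
    (hd : 1 ≤ d) (htd : 4 * d ≤ t) (r : Fin n) (β β' : Fin d → Fin q) (hne : β ≠ β') :
    E (ZR n d q σ r β * ZR n d q σ r β') = 0 := by
  obtain ⟨j, hj⟩ := Function.ne_iff.mp hne
  have e1 : ZR n d q σ r β = X (σ.symm (r, j), β j)
      * mon ((Finset.univ.erase j).val.map fun j' => (σ.symm (r, j'), β j')) := by
    rw [ZR, ← Finset.mul_prod_erase _ _ (Finset.mem_univ j), prod_X_eq_mon]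
  have e2 : ZR n d q σ r β' = X (σ.symm (r, j), β' j)
      * mon ((Finset.univ.erase j).val.map fun j' => (σ.symm (r, j'), β' j')) := by
    rw [ZR, ← Finset.mul_prod_erase _ _ (Finset.mem_univ j), prod_X_eq_mon]
  have e3 : ZR n d q σ r β * ZR n d q σ r β'
      = mon (((Finset.univ.erase j).val.map fun j' => (σ.symm (r, j'), β j'))
          + ((Finset.univ.erase j).val.map fun j' => (σ.symm (r, j'), β' j')))
        * (X (σ.symm (r, j), β j) * X (σ.symm (r, j), β' j)) := by
    rw [e1, e2, mon_add]; ring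
  rw [e3]
  refine red_orth E hb hsq h1 _ _ _ _ hj ?_
  simp [Multiset.card_add, Finset.card_erase_of_mem]
  omega

lemma edge_consistency (hb : HB n d q t E) (hsq : HS n d q t E) (h1 : H1 n d q t E)
    (hd : 1 ≤ d) (htd : 4 * d ≤ t) (ℓ : Fin n) (α : Fin d → Fin q)
    (r : Fin n) (β : Fin d → Fin q) (i j : Fin d)
    (hij : σ.symm (r, j) = (ℓ, i)) (hne : α i ≠ β j) :
    E (ZL n d q ℓ α * ZR n d q σ r β) = 0 := by
  have e1 : ZL n d q ℓ α = X ((ℓ, i), α i)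
      * mon ((Finset.univ.erase i).val.map fun i' => ((ℓ, i'), α i')) := by
    rw [ZL, ← Finset.mul_prod_erase _ _ (Finset.mem_univ i), prod_X_eq_mon]
  have e2 : ZR n d q σ r β = X ((ℓ, i), β j)
      * mon ((Finset.univ.erase j).val.map fun j' => (σ.symm (r, j'), β j')) := by
    rw [ZR, ← Finset.mul_prod_erase _ _ (Finset.mem_univ j), prod_X_eq_mon, hij]
  have e3 : ZL n d q ℓ α * ZR n d q σ r β
      = mon (((Finset.univ.erase i).val.map fun i' => ((ℓ, i'), α i'))
          + ((Finset.univ.erase j).val.map fun j' => (σ.symm (r, j'), β j')))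
        * (X ((ℓ, i), α i) * X ((ℓ, i), β j)) := by
    rw [e1, e2, mon_add]; ring
  rw [e3]
  refine red_orth E hb hsq h1 _ _ _ _ hne ?_
  simp [Multiset.card_add, Finset.card_erase_of_mem]
  omega

lemma inner_code_zero (htd : 4 * d ≤ t) {C₀ : Set (Fin d → Fin q)}
    (hael : ∀ (ℓ : Fin n) (α : Fin d → Fin q), α ∉ C₀ →
      ∀ p : PL n d q, p.totalDegree + d ≤ t → E (p * ZL n d q ℓ α) = 0)
    (ℓ : Fin n) (α : Fin d → Fin q) (hα : α ∉ C₀) (r : Fin n) (β : Fin d → Fin q) :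
    E (ZL n d q ℓ α * ZR n d q σ r β) = 0 := by
  rw [mul_comm]
  exact hael ℓ α hα _ (le_trans (add_le_add_left (totalDegree_ZR σ r β) d) (by omega))

end Facts

section Gram
variable {n d q t : ℕ}

lemma gram_mixing (σ : Fin n × Fin d ≃ Fin n × Fin d) (E : PL n d q →ₗ[ℝ] ℝ)
    (hsq : HS n d q t E) (hn : 1 ≤ n) (hd : 1 ≤ d) (htd : 4 * d ≤ t)
    (lam : ℝ) (hlam : 0 ≤ lam) (hmix : IsMixing n d σ lam)
    (A B : Fin n → PL n d q)
    (hA : ∀ ℓ, (A ℓ).totalDegree ≤ d) (hB : ∀ r, (B r).totalDegree ≤ d)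
    (hAsq : ∀ ℓ, E (A ℓ * A ℓ) ≤ 1) (hBsq : ∀ r, E (B r * B r) ≤ 1) :
    (∑ ℓ, ∑ r, E (A ℓ * B r)) / ((n : ℝ) * n) - lam
      ≤ (∑ e : Fin n × Fin d, E (A e.1 * B (σ e).1)) / ((n : ℝ) * d) := by
  classical
  set w : Fin n ⊕ Fin n → PL n d q := Sum.elim A B with hw
  have hwdeg : ∀ k, (w k).totalDegree ≤ d := by
    intro k; cases k with
    | inl ℓ => exact hA ℓ
    | inr r => exact hB r
  set Γ : Matrix (Fin n ⊕ Fin n) (Fin n ⊕ Fin n) ℝ := fun k l => E (w k * w l) with hΓ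
  have hpsd : Γ.PosSemidef := by
    refine Matrix.PosSemidef.of_dotProduct_mulVec_nonneg ?_ ?_
    · ext k l
      rw [Matrix.conjTranspose_apply, star_trivial]
      simp only [hΓ]
      rw [mul_comm]
    · intro x
      rw [star_trivial]
      have hdot : dotProduct x (Γ.mulVec x)
          = ∑ k, ∑ l, (x k * x l) * E (w k * w l) := by
        simp only [dotProduct, Matrix.mulVec, Finset.mul_sum, hΓ]
        exact Finset.sum_congr rfl fun k _ => Finset.sum_congr rfl fun l _ => by ring
      have hquad : ∑ k, ∑ l, (x k * x l) * E (w k * w l)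
          = E ((∑ k, x k • w k) ^ 2) := by
        rw [sq, Finset.sum_mul_sum]
        rw [map_sum]
        refine (Finset.sum_congr rfl fun k _ => ?_).symm
        rw [map_sum]
        refine Finset.sum_congr rfl fun l _ => ?_
        rw [smul_mul_smul_comm, map_smul, smul_eq_mul]
      rw [hdot, hquad]
      refine hsq _ ?_
      refine le_trans (totalDegree_finset_sum _ _) ?_
      refine Finset.sup_le fun k _ => le_trans (totalDegree_smul_le _ _) ?_
      refine le_trans (hwdeg k) ?_
      rw [Nat.le_div_iff_mul_le (by norm_num)]
      omega
  obtain ⟨V, hV⟩ : ∃ V : Matrix (Fin n ⊕ Fin n) (Fin n ⊕ Fin n) ℝ, Γ = Matrix.conjTranspose V * V := by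
    open scoped MatrixOrder in exact CStarAlgebra.nonneg_iff_eq_star_mul_self.mp hpsd.nonneg
  have hentry : ∀ k l, E (w k * w l) = ∑ c, V c k * V c l := by
    intro k l
    have h := congrFun (congrFun hV k) l
    simp only [hΓ, Matrix.mul_apply, Matrix.conjTranspose_apply, star_trivial] at h
    exact h
  set F : (Fin n ⊕ Fin n) → Fin n → ℝ := fun c ℓ => V c (Sum.inl ℓ) with hF
  set G : (Fin n ⊕ Fin n) → Fin n → ℝ := fun c r => V c (Sum.inr r) with hG
  have hedge : (∑ e : Fin n × Fin d, E (A e.1 * B (σ e).1))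
      = ∑ c, ∑ e : Fin n × Fin d, F c e.1 * G c (σ e).1 := by
    rw [Finset.sum_comm]
    refine Finset.sum_congr rfl fun e _ => ?_
    exact hentry (Sum.inl e.1) (Sum.inr (σ e).1)
  have hpair : (∑ ℓ, ∑ r, E (A ℓ * B r))
      = ∑ c, (∑ ℓ, F c ℓ) * (∑ r, G c r) := by
    have h1 : (∑ ℓ, ∑ r, E (A ℓ * B r)) = ∑ ℓ, ∑ r, ∑ c, F c ℓ * G c r := by
      refine Finset.sum_congr rfl fun ℓ _ => Finset.sum_congr rfl fun r _ => ?_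
      exact hentry (Sum.inl ℓ) (Sum.inr r)
    rw [h1]
    have h2 : ∀ ℓ : Fin n, (∑ r, ∑ c, F c ℓ * G c r) = ∑ c, F c ℓ * ∑ r, G c r := by
      intro ℓ
      rw [Finset.sum_comm]
      exact Finset.sum_congr rfl fun c _ => (Finset.mul_sum _ _ _).symm
    rw [Finset.sum_congr rfl fun ℓ _ => h2 ℓ, Finset.sum_comm]
    exact Finset.sum_congr rfl fun c _ => (Finset.sum_mul _ _ _).symm
  have hn0 : (0:ℝ) < n := by exact_mod_cast hn
  set a : (Fin n ⊕ Fin n) → ℝ := fun c => (∑ ℓ, F c ℓ ^ 2) / n with ha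
  set b : (Fin n ⊕ Fin n) → ℝ := fun c => (∑ r, G c r ^ 2) / n with hb'
  have hanneg : ∀ c, 0 ≤ a c := fun c =>
    div_nonneg (Finset.sum_nonneg fun ℓ _ => sq_nonneg _) (le_of_lt hn0)
  have hbnneg : ∀ c, 0 ≤ b c := fun c =>
    div_nonneg (Finset.sum_nonneg fun r _ => sq_nonneg _) (le_of_lt hn0)
  have hper : ∀ c, -(lam * Real.sqrt (a c) * Real.sqrt (b c))
      ≤ (∑ e : Fin n × Fin d, F c e.1 * G c (σ e).1) / ((n:ℝ) * d)
        - (∑ ℓ, F c ℓ) * (∑ r, G c r) / ((n:ℝ) * n) := by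
    intro c
    have := hmix (F c) (G c)
    have h3 : (∑ ℓ, F c ℓ) / (n:ℝ) * ((∑ r, G c r) / (n:ℝ))
        = (∑ ℓ, F c ℓ) * (∑ r, G c r) / ((n:ℝ) * n) := by
      rw [div_mul_div_comm]
    rw [h3] at this
    exact (abs_le.mp this).1.trans_eq' rfl
  have hsuma : ∑ c, a c ≤ 1 := by
    have : ∑ c, ∑ ℓ, F c ℓ ^ 2 = ∑ ℓ, E (A ℓ * A ℓ) := by
      rw [Finset.sum_comm]
      refine Finset.sum_congr rfl fun ℓ _ => ?_
      have h6 := hentry (Sum.inl ℓ) (Sum.inl ℓ)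
      simp only [hw, Sum.elim_inl] at h6
      rw [h6]
      exact Finset.sum_congr rfl fun c _ => sq (F c ℓ)
    rw [← Finset.sum_div, this]
    rw [div_le_one hn0]
    calc ∑ ℓ, E (A ℓ * A ℓ) ≤ ∑ _ℓ : Fin n, (1:ℝ) := Finset.sum_le_sum fun ℓ _ => hAsq ℓ
      _ = n := by simp
  have hsumb : ∑ c, b c ≤ 1 := by
    have : ∑ c, ∑ r, G c r ^ 2 = ∑ r, E (B r * B r) := by
      rw [Finset.sum_comm]
      refine Finset.sum_congr rfl fun r _ => ?_
      have h6 := hentry (Sum.inr r) (Sum.inr r)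
      simp only [hw, Sum.elim_inr] at h6
      rw [h6]
      exact Finset.sum_congr rfl fun c _ => sq (G c r)
    rw [← Finset.sum_div, this]
    rw [div_le_one hn0]
    calc ∑ r, E (B r * B r) ≤ ∑ _r : Fin n, (1:ℝ) := Finset.sum_le_sum fun r _ => hBsq r
      _ = n := by simp
  have hT : ∑ c, Real.sqrt (a c) * Real.sqrt (b c) ≤ 1 := by
    have hT0 : 0 ≤ ∑ c, Real.sqrt (a c) * Real.sqrt (b c) :=
      Finset.sum_nonneg fun c _ => mul_nonneg (Real.sqrt_nonneg _) (Real.sqrt_nonneg _)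
    have hcs := Finset.sum_mul_sq_le_sq_mul_sq Finset.univ
      (fun c => Real.sqrt (a c)) (fun c => Real.sqrt (b c))
    have h4 : ∑ c, Real.sqrt (a c) ^ 2 = ∑ c, a c :=
      Finset.sum_congr rfl fun c _ => Real.sq_sqrt (hanneg c)
    have h5 : ∑ c, Real.sqrt (b c) ^ 2 = ∑ c, b c :=
      Finset.sum_congr rfl fun c _ => Real.sq_sqrt (hbnneg c)
    rw [h4, h5] at hcs
    nlinarith [Finset.sum_nonneg (fun c (_ : c ∈ Finset.univ) => hanneg c),
      Finset.sum_nonneg (fun c (_ : c ∈ Finset.univ) => hbnneg c)]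
  have hdiff : (∑ e : Fin n × Fin d, E (A e.1 * B (σ e).1)) / ((n : ℝ) * d)
      - (∑ ℓ, ∑ r, E (A ℓ * B r)) / ((n : ℝ) * n)
      = ∑ c, ((∑ e : Fin n × Fin d, F c e.1 * G c (σ e).1) / ((n:ℝ) * d)
        - (∑ ℓ, F c ℓ) * (∑ r, G c r) / ((n:ℝ) * n)) := by
    rw [hedge, hpair, Finset.sum_div, Finset.sum_div, ← Finset.sum_sub_distrib]
  have hfin : -(lam * ∑ c, Real.sqrt (a c) * Real.sqrt (b c))
      ≤ (∑ e : Fin n × Fin d, E (A e.1 * B (σ e).1)) / ((n : ℝ) * d)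
        - (∑ ℓ, ∑ r, E (A ℓ * B r)) / ((n : ℝ) * n) := by
    rw [hdiff, Finset.mul_sum, ← Finset.sum_neg_distrib]
    refine Finset.sum_le_sum fun c _ => ?_
    have := hper c
    linarith [this]
  have : lam * ∑ c, Real.sqrt (a c) * Real.sqrt (b c) ≤ lam * 1 :=
    mul_le_mul_of_nonneg_left hT hlam
  linarith
end Gram

section Main
variable {n d q t : ℕ}

lemma sum_erase_L (E : PL n d q →ₗ[ℝ] ℝ) (h1 : H1 n d q t E) (hone : E 1 = 1)
    (htd : 4 * d ≤ t) (ℓ : Fin n) (α₀ : Fin d → Fin q) :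
    ∑ α ∈ Finset.univ.erase α₀, E (ZL n d q ℓ α) = 1 - E (ZL n d q ℓ α₀) := by
  have h2 := Finset.sum_erase_add Finset.univ (fun α => E (ZL n d q ℓ α)) (Finset.mem_univ α₀)
  have h3 := sum_L_eq_one E h1 hone htd ℓ
  linarith [h2, h3]

lemma E_AA (E : PL n d q →ₗ[ℝ] ℝ) (hb : HB n d q t E) (hsq : HS n d q t E)
    (h1 : H1 n d q t E) (hd : 1 ≤ d) (htd : 4 * d ≤ t) (ℓ : Fin n) (α₀ : Fin d → Fin q) :
    E ((∑ α ∈ Finset.univ.erase α₀, ZL n d q ℓ α)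
      * (∑ α ∈ Finset.univ.erase α₀, ZL n d q ℓ α))
      = ∑ α ∈ Finset.univ.erase α₀, E (ZL n d q ℓ α) := by
  rw [Finset.sum_mul_sum]
  simp only [map_sum]
  refine Finset.sum_congr rfl fun α hα => ?_
  refine Finset.sum_eq_single_of_mem α hα (fun β _ hβ => ?_) |>.trans (sq_ZL E hb htd ℓ α)
  exact orth_ZL E hb hsq h1 hd htd ℓ α β (Ne.symm hβ)

end Main

section Main2
variable {n d q t : ℕ}

lemma step_comb (σ : Fin n × Fin d ≃ Fin n × Fin d) (E : PL n d q →ₗ[ℝ] ℝ)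
    (hb : HB n d q t E) (hsq : HS n d q t E) (h1 : H1 n d q t E)
    (C₀ : Set (Fin d → Fin q))
    (hael : ∀ (ℓ : Fin n) (α : Fin d → Fin q), α ∉ C₀ →
      ∀ p : PL n d q, p.totalDegree + d ≤ t → E (p * ZL n d q ℓ α) = 0)
    (hd : 1 ≤ d) (htd : 4 * d ≤ t) (δ₀ : ℝ) (hδ₀1 : δ₀ ≤ 1)
    (hC₀ : ∀ u ∈ C₀, ∀ v ∈ C₀, u ≠ v → δ₀ * d ≤ (hammingDist u v : ℝ))
    (h : Fin n × Fin d → Fin q) (hhL : ∀ ℓ : Fin n, (fun i => h (ℓ, i)) ∈ C₀)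
    (ℓ : Fin n) (α : Fin d → Fin q) (hα : α ≠ fun i => h (ℓ, i)) :
    ∑ i : Fin d, E (ZL n d q ℓ α
        * ZR n d q σ (σ (ℓ, i)).1 (fun j => h (σ.symm ((σ (ℓ, i)).1, j))))
      ≤ (1 - δ₀) * d * E (ZL n d q ℓ α) := by
  classical
  have hLnn := L_nonneg E hb hsq htd ℓ α
  by_cases hαC : α ∈ C₀
  · have key : ∀ i : Fin d, E (ZL n d q ℓ α
        * ZR n d q σ (σ (ℓ, i)).1 (fun j => h (σ.symm ((σ (ℓ, i)).1, j))))
        ≤ if α i = h (ℓ, i) then E (ZL n d q ℓ α) else 0 := by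
      intro i
      have hsymm : σ.symm ((σ (ℓ, i)).1, (σ (ℓ, i)).2) = (ℓ, i) := by
        rw [Prod.mk.eta, Equiv.symm_apply_apply]
      by_cases hcons : α i = h (ℓ, i)
      · rw [if_pos hcons]
        have hm := marginal_L σ E h1 htd ℓ α (σ (ℓ, i)).1
        have hs := Finset.single_le_sum
          (f := fun β => E (ZL n d q ℓ α * ZR n d q σ (σ (ℓ, i)).1 β))
          (fun β _ => P_nonneg σ E hb hsq htd ℓ α (σ (ℓ, i)).1 β)
          (Finset.mem_univ (fun j => h (σ.symm ((σ (ℓ, i)).1, j))))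
        linarith
      · rw [if_neg hcons]
        refine le_of_eq (edge_consistency σ E hb hsq h1 hd htd ℓ α (σ (ℓ, i)).1 _
          i (σ (ℓ, i)).2 hsymm ?_)
        simpa [hsymm] using hcons
    calc ∑ i : Fin d, E (ZL n d q ℓ α
          * ZR n d q σ (σ (ℓ, i)).1 (fun j => h (σ.symm ((σ (ℓ, i)).1, j))))
        ≤ ∑ i : Fin d, if α i = h (ℓ, i) then E (ZL n d q ℓ α) else 0 :=
          Finset.sum_le_sum fun i _ => key i
      _ = ((Finset.univ.filter fun i => α i = h (ℓ, i)).card : ℝ) * E (ZL n d q ℓ α) := by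
          rw [← Finset.sum_filter, Finset.sum_const, nsmul_eq_mul]
      _ ≤ (1 - δ₀) * d * E (ZL n d q ℓ α) := by
          refine mul_le_mul_of_nonneg_right ?_ hLnn
          have hdist := hC₀ α hαC _ (hhL ℓ) hα
          have hcard : (Finset.univ.filter fun i => α i = h (ℓ, i)).card
              + (Finset.univ.filter fun i => ¬ (α i = h (ℓ, i))).card = d := by
            rw [Finset.card_filter_add_card_filter_not]
            simp
          have hdef : hammingDist α (fun i => h (ℓ, i))
              = (Finset.univ.filter fun i => ¬ (α i = h (ℓ, i))).card := rfl
          rw [hdef] at hdist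
          have : ((Finset.univ.filter fun i => α i = h (ℓ, i)).card : ℝ)
              + ((Finset.univ.filter fun i => ¬ (α i = h (ℓ, i))).card : ℝ) = d := by
            exact_mod_cast congrArg (Nat.cast : ℕ → ℝ) hcard
          nlinarith
  · have hz : ∀ i : Fin d, E (ZL n d q ℓ α
        * ZR n d q σ (σ (ℓ, i)).1 (fun j => h (σ.symm ((σ (ℓ, i)).1, j)))) = 0 :=
      fun i => inner_code_zero σ E htd hael ℓ α hαC _ _
    rw [Finset.sum_congr rfl fun i _ => hz i, Finset.sum_const]
    have : (0:ℝ) ≤ (1 - δ₀) * d * E (ZL n d q ℓ α) :=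
      mul_nonneg (mul_nonneg (by linarith) (Nat.cast_nonneg d)) hLnn
    simpa using this

lemma step_eta (σ : Fin n × Fin d ≃ Fin n × Fin d) (E : PL n d q →ₗ[ℝ] ℝ)
    (ℓ : Fin n) (r : Fin n) (α₀ β₀ : Fin d → Fin q) :
    E (∑ α ∈ Finset.univ.erase α₀, ZL n d q ℓ α) * E (ZR n d q σ r β₀)
      - E ((∑ α ∈ Finset.univ.erase α₀, ZL n d q ℓ α) * ZR n d q σ r β₀)
      ≤ ∑ α : Fin d → Fin q, ∑ β : Fin d → Fin q,
          |E (ZL n d q ℓ α * ZR n d q σ r β) - E (ZL n d q ℓ α) * E (ZR n d q σ r β)| := by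
  classical
  rw [map_sum, Finset.sum_mul, Finset.sum_mul, map_sum]
  rw [← Finset.sum_sub_distrib]
  calc ∑ α ∈ Finset.univ.erase α₀,
        (E (ZL n d q ℓ α) * E (ZR n d q σ r β₀) - E (ZL n d q ℓ α * ZR n d q σ r β₀))
      ≤ ∑ α ∈ Finset.univ.erase α₀,
        |E (ZL n d q ℓ α * ZR n d q σ r β₀) - E (ZL n d q ℓ α) * E (ZR n d q σ r β₀)| := by
        refine Finset.sum_le_sum fun α _ => ?_
        rw [abs_sub_comm]
        exact le_abs_self _
    _ ≤ ∑ α : Fin d → Fin q,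
        |E (ZL n d q ℓ α * ZR n d q σ r β₀) - E (ZL n d q ℓ α) * E (ZR n d q σ r β₀)| :=
        Finset.sum_le_sum_of_subset_of_nonneg (Finset.erase_subset _ _)
          (fun α _ _ => abs_nonneg _)
    _ ≤ ∑ α : Fin d → Fin q, ∑ β : Fin d → Fin q,
          |E (ZL n d q ℓ α * ZR n d q σ r β) - E (ZL n d q ℓ α) * E (ZR n d q σ r β)| := by
        refine Finset.sum_le_sum fun α _ => ?_
        exact Finset.single_le_sum
          (f := fun β => |E (ZL n d q ℓ α * ZR n d q σ r β)
            - E (ZL n d q ℓ α) * E (ZR n d q σ r β)|)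
          (fun β _ => abs_nonneg _) (Finset.mem_univ β₀)

end Main2

end AELaux

set_option maxHeartbeats 2000000 in
/-- **AEL distance amplification for `η`-good pseudocodewords.** If `Δ^L(Ẽ, h) > 0`, then
`Δ^R(Ẽ, h) ≥ δ₀ − (λ + η) / Δ^L(Ẽ, h)`. -/
theorem ael_pseudocodeword_distance (n d q t : ℕ) (hn : 1 ≤ n) (hd : 1 ≤ d) (hq : 2 ≤ q)
    (lam δ₀ η : ℝ) (hlam : 0 ≤ lam) (hη : 0 ≤ η) (hδ₀0 : 0 ≤ δ₀) (hδ₀1 : δ₀ ≤ 1)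
    (σ : Fin n × Fin d ≃ Fin n × Fin d) (hmix : IsMixing n d σ lam)
    (C₀ : Set (Fin d → Fin q))
    (hC₀ : ∀ u ∈ C₀, ∀ v ∈ C₀, u ≠ v → δ₀ * d ≤ (hammingDist u v : ℝ))
    (ht : Even t) (htd : 4 * d ≤ t)
    (E : MvPolynomial ((Fin n × Fin d) × Fin q) ℝ →ₗ[ℝ] ℝ)
    (hE : IsAELPseudocodeword n d q t C₀ E) (hgood : IsEtaGood n d q σ E η)
    (h : Fin n × Fin d → Fin q)
    (hhL : ∀ ℓ : Fin n, (fun i => h (ℓ, i)) ∈ C₀)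
    (hpos : 0 < deltaLPE n d q E h) :
    δ₀ - (lam + η) / deltaLPE n d q E h ≤ deltaRPE n d q σ E h := by
  classical
  obtain ⟨⟨hone, hsq', hbool, hs1'⟩, hael⟩ := hE
  have hb : AELaux.HB n d q t E := hbool
  have hS : AELaux.HS n d q t E := hsq'
  have h1 : AELaux.H1 n d q t E := hs1'
  have hn0 : (0:ℝ) < n := by exact_mod_cast hn
  have hd0 : (0:ℝ) < d := by exact_mod_cast hd
  set A : Fin n → AELaux.PL n d q :=
    fun ℓ => ∑ α ∈ Finset.univ.erase (fun i => h (ℓ, i)), ZL n d q ℓ α with hAdef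
  set B : Fin n → AELaux.PL n d q :=
    fun r => ZR n d q σ r (fun j => h (σ.symm (r, j))) with hBdef
  have hEA : ∀ ℓ, E (A ℓ) = 1 - E (ZL n d q ℓ (fun i => h (ℓ, i))) := by
    intro ℓ
    rw [hAdef]
    rw [map_sum]
    exact AELaux.sum_erase_L E h1 hone htd ℓ _
  have hEAnn : ∀ ℓ, 0 ≤ E (A ℓ) := by
    intro ℓ
    rw [hAdef, map_sum]
    exact Finset.sum_nonneg fun α _ => AELaux.L_nonneg E hb hS htd ℓ α
  have hEBnn : ∀ r, 0 ≤ E (B r) := fun r => AELaux.R_nonneg σ E hb hS htd r _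
  have hEB_le : ∀ r, E (B r) ≤ 1 := by
    intro r
    have hsum := AELaux.sum_R_eq_one σ E h1 hone htd r
    have hs := Finset.single_le_sum (f := fun β => E (ZR n d q σ r β))
      (fun β _ => AELaux.R_nonneg σ E hb hS htd r β)
      (Finset.mem_univ (fun j => h (σ.symm (r, j))))
    rw [hsum] at hs
    exact hs
  have hAsq : ∀ ℓ, E (A ℓ * A ℓ) ≤ 1 := by
    intro ℓ
    rw [hAdef]
    rw [AELaux.E_AA E hb hS h1 hd htd ℓ _]
    have := AELaux.sum_erase_L E h1 hone htd ℓ (fun i => h (ℓ, i))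
    have := AELaux.L_nonneg E hb hS htd ℓ (fun i => h (ℓ, i))
    linarith
  have hBsq : ∀ r, E (B r * B r) ≤ 1 := by
    intro r
    rw [hBdef]
    rw [AELaux.sq_ZR σ E hb htd r _]
    have := hEB_le r
    rw [hBdef] at this
    exact this
  have hAdeg : ∀ ℓ, (A ℓ).totalDegree ≤ d := by
    intro ℓ
    rw [hAdef]
    refine le_trans (totalDegree_finset_sum _ _) ?_
    exact Finset.sup_le fun α _ => AELaux.totalDegree_ZL ℓ α
  have hBdeg : ∀ r, (B r).totalDegree ≤ d := by
    intro r
    rw [hBdef]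
    exact AELaux.totalDegree_ZR σ r _
  -- Step I : spectral / Gram mixing
  have stepI := AELaux.gram_mixing σ E hS hn hd htd lam hlam hmix A B hAdeg hBdeg hAsq hBsq
  -- Step II : combinatorial bound on the edge average
  have stepII : (∑ e : Fin n × Fin d, E (A e.1 * B (σ e).1))
      ≤ (1 - δ₀) * d * ∑ ℓ, E (A ℓ) := by
    rw [Fintype.sum_prod_type]
    have perl : ∀ ℓ, ∑ i : Fin d, E (A ℓ * B (σ (ℓ, i)).1) ≤ (1 - δ₀) * d * E (A ℓ) := by
      intro ℓ
      have expand : ∀ i : Fin d, E (A ℓ * B (σ (ℓ, i)).1)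
          = ∑ α ∈ Finset.univ.erase (fun i' => h (ℓ, i')),
              E (ZL n d q ℓ α * B (σ (ℓ, i)).1) := by
        intro i
        rw [hAdef, Finset.sum_mul, map_sum]
      rw [Finset.sum_congr rfl fun i _ => expand i, Finset.sum_comm]
      have bound : ∀ α ∈ Finset.univ.erase (fun i' => h (ℓ, i')),
          ∑ i : Fin d, E (ZL n d q ℓ α * B (σ (ℓ, i)).1)
            ≤ (1 - δ₀) * d * E (ZL n d q ℓ α) := by
        intro α hα
        have hαne : α ≠ fun i => h (ℓ, i) := (Finset.mem_erase.mp hα).1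
        have := AELaux.step_comb σ E hb hS h1 C₀ hael hd htd δ₀ hδ₀1 hC₀ h hhL ℓ α hαne
        rw [hBdef]
        exact this
      calc ∑ α ∈ Finset.univ.erase (fun i' => h (ℓ, i')),
            ∑ i : Fin d, E (ZL n d q ℓ α * B (σ (ℓ, i)).1)
          ≤ ∑ α ∈ Finset.univ.erase (fun i' => h (ℓ, i')),
              (1 - δ₀) * d * E (ZL n d q ℓ α) := Finset.sum_le_sum bound
        _ = (1 - δ₀) * d * E (A ℓ) := by
            rw [hAdef, map_sum, Finset.mul_sum]
    calc ∑ ℓ, ∑ i : Fin d, E (A ℓ * B (σ (ℓ, i)).1)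
        ≤ ∑ ℓ, (1 - δ₀) * d * E (A ℓ) := Finset.sum_le_sum fun ℓ _ => perl ℓ
      _ = (1 - δ₀) * d * ∑ ℓ, E (A ℓ) := (Finset.mul_sum _ _ _).symm
  -- Step III : η-goodness
  have stepIII : (∑ ℓ, E (A ℓ)) * (∑ r, E (B r))
      ≤ (∑ ℓ, ∑ r, E (A ℓ * B r)) + ((n:ℝ) * n) * η := by
    have hgood' : ∑ ℓ : Fin n, ∑ r : Fin n, ∑ α : Fin d → Fin q, ∑ β : Fin d → Fin q,
        |E (ZL n d q ℓ α * ZR n d q σ r β) - E (ZL n d q ℓ α) * E (ZR n d q σ r β)|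
        ≤ ((n:ℝ) * n) * η := by
      have h2 := hgood
      rw [IsEtaGood, div_le_iff₀ (by positivity)] at h2
      linarith
    rw [Finset.sum_mul_sum]
    have per : ∀ ℓ r, E (A ℓ) * E (B r) ≤ E (A ℓ * B r)
        + ∑ α : Fin d → Fin q, ∑ β : Fin d → Fin q,
            |E (ZL n d q ℓ α * ZR n d q σ r β) - E (ZL n d q ℓ α) * E (ZR n d q σ r β)| := by
      intro ℓ r
      have := AELaux.step_eta σ E ℓ r (fun i => h (ℓ, i)) (fun j => h (σ.symm (r, j)))
      rw [hAdef, hBdef]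
      linarith
    calc ∑ ℓ, ∑ r, E (A ℓ) * E (B r)
        ≤ ∑ ℓ, ∑ r, (E (A ℓ * B r)
          + ∑ α : Fin d → Fin q, ∑ β : Fin d → Fin q,
            |E (ZL n d q ℓ α * ZR n d q σ r β) - E (ZL n d q ℓ α) * E (ZR n d q σ r β)|) :=
          Finset.sum_le_sum fun ℓ _ => Finset.sum_le_sum fun r _ => per ℓ r
      _ = (∑ ℓ, ∑ r, E (A ℓ * B r)) + ∑ ℓ : Fin n, ∑ r : Fin n,
            ∑ α : Fin d → Fin q, ∑ β : Fin d → Fin q,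
            |E (ZL n d q ℓ α * ZR n d q σ r β) - E (ZL n d q ℓ α) * E (ZR n d q σ r β)| := by
          rw [← Finset.sum_add_distrib]
          exact Finset.sum_congr rfl fun ℓ _ => Finset.sum_add_distrib
      _ ≤ (∑ ℓ, ∑ r, E (A ℓ * B r)) + ((n:ℝ) * n) * η := by linarith
  -- final arithmetic
  set SA : ℝ := ∑ ℓ, E (A ℓ) with hSA
  set SB : ℝ := ∑ r, E (B r) with hSB
  set SP : ℝ := ∑ ℓ, ∑ r, E (A ℓ * B r) with hSP
  set SE : ℝ := ∑ e : Fin n × Fin d, E (A e.1 * B (σ e).1) with hSE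
  have hDL : deltaLPE n d q E h = SA / n := by
    rw [deltaLPE, hSA]
    congr 1
    exact Finset.sum_congr rfl fun ℓ _ => (hEA ℓ).symm
  have hDR : deltaRPE n d q σ E h = ((n:ℝ) - SB) / n := by
    rw [deltaRPE, hSB]
    congr 1
    rw [Finset.sum_sub_distrib, Finset.sum_const, Finset.card_univ]
    simp [hBdef]
  set DL := deltaLPE n d q E h with hDLdef
  set DR := deltaRPE n d q σ E h with hDRdef
  have hSAeq : SA = (n:ℝ) * DL := by rw [hDL]; field_simp
  have hSBeq : SB = (n:ℝ) - (n:ℝ) * DR := by rw [hDR]; field_simp; ring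
  have key : DL * (1 - DR) ≤ (1 - δ₀) * DL + lam + η := by
    have e1 : SA * SB / ((n:ℝ) * n) ≤ SP / ((n:ℝ) * n) + η := by
      rw [div_add' _ _ _ (by positivity), div_le_div_iff₀ (by positivity) (by positivity)]
      nlinarith [stepIII]
    have e2 : SP / ((n:ℝ) * n) ≤ SE / ((n:ℝ) * d) + lam := by linarith [stepI]
    have e3 : SE / ((n:ℝ) * d) ≤ (1 - δ₀) * SA / n := by
      rw [div_le_div_iff₀ (by positivity) hn0]
      nlinarith [stepII]
    have e4 : SA * SB / ((n:ℝ) * n) = DL * (1 - DR) := by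
      rw [hSAeq, hSBeq]
      field_simp
    have e5 : (1 - δ₀) * SA / n = (1 - δ₀) * DL := by
      rw [hSAeq]
      field_simp
    calc DL * (1 - DR) = SA * SB / ((n:ℝ) * n) := e4.symm
      _ ≤ SP / ((n:ℝ) * n) + η := e1
      _ ≤ SE / ((n:ℝ) * d) + lam + η := by linarith
      _ ≤ (1 - δ₀) * SA / n + lam + η := by linarith
      _ = (1 - δ₀) * DL + lam + η := by rw [e5]
  have hfin : δ₀ - DR ≤ (lam + η) / DL := by
    rw [le_div_iff₀ hpos]
    nlinarith [key]
  linarith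
end
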